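/- arXiv:math/0304047 — 6 statements merged into one kernel-verified Lean document; each statement's English description precedes it below -/
import Mathlib

section
/- Let q be a real number with q > 1. For a natural number a write (1/q)_a = ∏_{j=1}^{a} (1 - q^{-j}) (with (1/q)_0 = 1). Then for every natural number n, ∑_{r=0}^{n} (-1)^{n-r} (1/q)_n q^r / ((1/q)_r (1/q)_{n-r}) = q^n · ∏_{j=1}^{⌈n/2⌉} (1 - q^{1-2j}). (Equivalently, the right side is q^n(1-1/q)(1-1/q^3)⋯(1-1/q^{n-1}) if n is even and q^n(1-1/q)(1-1/q^3)⋯(1-1/q^n) if n is odd.) -/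
/-- The finite q-Pochhammer product `(1/q)_a = ∏_{j=1}^{a} (1 - q^{-j})`. -/
noncomputable def qPoch (q : ℝ) (a : ℕ) : ℝ := ∏ j ∈ Finset.Icc 1 a, (1 - q⁻¹ ^ j)

noncomputable def qB (q : ℝ) (n r : ℕ) : ℝ :=
  if r ≤ n then qPoch q n / (qPoch q r * qPoch q (n - r)) else 0

noncomputable def qF (q x : ℝ) (n : ℕ) : ℝ :=
  ∑ r ∈ Finset.range (n + 1), qB q n r * x ^ r

lemma qPoch_zero (q : ℝ) : qPoch q 0 = 1 := by simp [qPoch]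

lemma qPoch_succ (q : ℝ) (a : ℕ) :
    qPoch q (a + 1) = qPoch q a * (1 - q⁻¹ ^ (a + 1)) := by
  rw [qPoch, qPoch, Finset.prod_Icc_succ_top (by omega)]

lemma fact_pos {q : ℝ} (hq : 1 < q) (j : ℕ) : 0 < 1 - q⁻¹ ^ (j + 1) := by
  have h0 : (0:ℝ) ≤ q⁻¹ := by positivity
  have h1 : q⁻¹ < 1 := inv_lt_one_of_one_lt₀ hq
  have : q⁻¹ ^ (j + 1) < 1 := pow_lt_one₀ h0 h1 (by omega)
  linarith

lemma qPoch_pos {q : ℝ} (hq : 1 < q) (a : ℕ) : 0 < qPoch q a := by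
  induction a with
  | zero => simp [qPoch_zero]
  | succ a ih => rw [qPoch_succ]; exact mul_pos ih (fact_pos hq a)

lemma qPoch_ne {q : ℝ} (hq : 1 < q) (a : ℕ) : qPoch q a ≠ 0 :=
  (qPoch_pos hq a).ne'

lemma qB_zero {q : ℝ} (hq : 1 < q) (n : ℕ) : qB q n 0 = 1 := by
  rw [qB, if_pos (Nat.zero_le n)]
  simp [qPoch_zero, div_self (qPoch_ne hq n)]

lemma qB_diag {q : ℝ} (hq : 1 < q) (n : ℕ) : qB q n n = 1 := by
  rw [qB, if_pos le_rfl]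
  simp [qPoch_zero, div_self (qPoch_ne hq n)]

lemma qB_overflow (q : ℝ) (n : ℕ) : qB q n (n + 1) = 0 := by
  rw [qB, if_neg (by omega)]

lemma qB_pascal1 {q : ℝ} (hq : 1 < q) {n i : ℕ} (h : i ≤ n) :
    qB q (n + 1) (i + 1) = qB q n i + q⁻¹ ^ (i + 1) * qB q n (i + 1) := by
  rcases eq_or_lt_of_le h with rfl | h'
  · rw [qB_diag hq, qB_diag hq, qB_overflow]; ring
  · obtain ⟨m, rfl⟩ : ∃ m, n = i + 1 + m := ⟨n - (i + 1), by omega⟩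
    rw [qB, if_pos (by omega), qB, if_pos (by omega), qB, if_pos (by omega)]
    have e1 : i + 1 + m - i = m + 1 := by omega
    have e2 : i + 1 + m - (i + 1) = m := by omega
    have e3 : i + 1 + m + 1 - (i + 1) = m + 1 := by omega
    rw [e1, e2, e3, qPoch_succ q (i + 1 + m), qPoch_succ q i, qPoch_succ q m]
    have hPi := qPoch_ne hq i
    have hPm := qPoch_ne hq m
    have h1 := (fact_pos hq i).ne'
    have h2 := (fact_pos hq m).ne'
    have hq0 : q ≠ 0 := by positivity
    rw [← mul_div_assoc]
    rw [div_add_div _ _ (mul_ne_zero hPi (mul_ne_zero hPm h2))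
        (mul_ne_zero (mul_ne_zero hPi h1) hPm),
      div_eq_div_iff (mul_ne_zero (mul_ne_zero hPi h1) (mul_ne_zero hPm h2))
        (mul_ne_zero (mul_ne_zero hPi (mul_ne_zero hPm h2))
          (mul_ne_zero (mul_ne_zero hPi h1) hPm))]
    ring

lemma qB_pascal2 {q : ℝ} (hq : 1 < q) {n i : ℕ} (h : i ≤ n) :
    qB q (n + 1) (i + 1) = q⁻¹ ^ (n - i) * qB q n i + qB q n (i + 1) := by
  rcases eq_or_lt_of_le h with rfl | h'
  · rw [qB_diag hq, qB_diag hq, qB_overflow, Nat.sub_self]; ring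
  · obtain ⟨m, rfl⟩ : ∃ m, n = i + 1 + m := ⟨n - (i + 1), by omega⟩
    rw [qB, if_pos (by omega), qB, if_pos (by omega), qB, if_pos (by omega)]
    have e1 : i + 1 + m - i = m + 1 := by omega
    have e2 : i + 1 + m - (i + 1) = m := by omega
    have e3 : i + 1 + m + 1 - (i + 1) = m + 1 := by omega
    rw [e1, e2, e3, qPoch_succ q (i + 1 + m), qPoch_succ q i, qPoch_succ q m]
    have hPi := qPoch_ne hq i
    have hPm := qPoch_ne hq m
    have h1 := (fact_pos hq i).ne'
    have h2 := (fact_pos hq m).ne'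
    have hq0 : q ≠ 0 := by positivity
    rw [← mul_div_assoc]
    rw [div_add_div _ _ (mul_ne_zero hPi (mul_ne_zero hPm h2))
        (mul_ne_zero (mul_ne_zero hPi h1) hPm),
      div_eq_div_iff (mul_ne_zero (mul_ne_zero hPi h1) (mul_ne_zero hPm h2))
        (mul_ne_zero (mul_ne_zero hPi (mul_ne_zero hPm h2))
          (mul_ne_zero (mul_ne_zero hPi h1) hPm))]
    ring

lemma qF_ruleA {q : ℝ} (hq : 1 < q) (x : ℝ) (n : ℕ) :
    qF q x (n + 1) = x * qF q x n + qF q (x * q⁻¹) n := by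
  unfold qF
  rw [Finset.sum_range_succ' (fun r => qB q (n + 1) r * x ^ r) (n + 1),
      Finset.sum_range_succ' (fun r => qB q n r * (x * q⁻¹) ^ r) n,
      Finset.mul_sum]
  have key : ∀ i ∈ Finset.range (n + 1),
      qB q (n + 1) (i + 1) * x ^ (i + 1)
        = x * (qB q n i * x ^ i) + qB q n (i + 1) * (x * q⁻¹) ^ (i + 1) := by
    intro i hi
    rw [qB_pascal1 hq (Nat.lt_succ_iff.mp (Finset.mem_range.mp hi)), mul_pow]
    ring
  rw [Finset.sum_congr rfl key, Finset.sum_add_distrib,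
      Finset.sum_range_succ (fun i => qB q n (i + 1) * (x * q⁻¹) ^ (i + 1)) n,
      qB_overflow, qB_zero hq, qB_zero hq]
  ring

lemma qF_ruleB {q : ℝ} (hq : 1 < q) (x : ℝ) (n : ℕ) :
    qF q x (n + 1) = qF q x n + x * q⁻¹ ^ n * qF q (x * q) n := by
  have hq0 : q ≠ 0 := by positivity
  unfold qF
  rw [Finset.sum_range_succ' (fun r => qB q (n + 1) r * x ^ r) (n + 1),
      Finset.sum_range_succ' (fun r => qB q n r * x ^ r) n,
      Finset.mul_sum]
  have key : ∀ i ∈ Finset.range (n + 1),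
      qB q (n + 1) (i + 1) * x ^ (i + 1)
        = x * q⁻¹ ^ n * (qB q n i * (x * q) ^ i) + qB q n (i + 1) * x ^ (i + 1) := by
    intro i hi
    have hin : i ≤ n := Nat.lt_succ_iff.mp (Finset.mem_range.mp hi)
    rw [qB_pascal2 hq hin, mul_pow]
    have hsplit : q⁻¹ ^ n = q⁻¹ ^ (n - i) * q⁻¹ ^ i := by
      rw [← pow_add]; congr 1; omega
    have hcancel : q ^ i * q⁻¹ ^ i = 1 := by
      rw [← mul_pow, mul_inv_cancel₀ hq0, one_pow]
    rw [hsplit]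
    linear_combination (-(x * x ^ i * q⁻¹ ^ (n - i) * qB q n i)) * hcancel
  rw [Finset.sum_congr rfl key, Finset.sum_add_distrib,
      Finset.sum_range_succ (fun i => qB q n (i + 1) * x ^ (i + 1)) n,
      qB_overflow, qB_zero hq, qB_zero hq]
  ring

lemma qF_rec {q : ℝ} (hq : 1 < q) (x : ℝ) (n : ℕ) :
    qF q x (n + 2) = (1 + x) * qF q x (n + 1) - x * (1 - q⁻¹ ^ (n + 1)) * qF q x n := by
  have hq0 : q ≠ 0 := by positivity
  have hA2 := qF_ruleA hq x (n + 1)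
  have hB := qF_ruleB hq (x * q⁻¹) n
  have hA1 := qF_ruleA hq x n
  rw [show x * q⁻¹ * q = x by field_simp] at hB
  linear_combination hA2 + hB - hA1

theorem stmt0 (q : ℝ) (hq : 1 < q) (n : ℕ) :
    ∑ r ∈ Finset.range (n + 1),
      (-1 : ℝ) ^ (n - r) * qPoch q n * q ^ r / (qPoch q r * qPoch q (n - r)) =
    q ^ n * ∏ j ∈ Finset.Icc 1 ((n + 1) / 2), (1 - q ^ (1 - 2 * (j : ℤ))) := by
  have hq0 : q ≠ 0 := by positivity
  have key : ∀ m : ℕ, (-1 : ℝ) ^ m * qF q (-q) m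
      = q ^ m * ∏ j ∈ Finset.Icc 1 ((m + 1) / 2), (1 - q ^ (1 - 2 * (j : ℤ))) := by
    intro m
    induction m using Nat.strong_induction_on with
    | _ m ih =>
      match m with
      | 0 =>
        simp [qF, qB_zero hq]
      | 1 =>
        have h1 : (1 + 1) / 2 = 1 := by norm_num
        rw [h1, Finset.Icc_self, Finset.prod_singleton]
        simp only [qF, Finset.sum_range_succ, Finset.sum_range_zero]
        rw [qB_zero hq, qB_diag hq]
        have hz : (q : ℝ) ^ (1 - 2 * ((1 : ℕ) : ℤ)) = q⁻¹ := by
          rw [show (1 - 2 * ((1 : ℕ) : ℤ)) = -1 by norm_num, zpow_neg_one]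
        rw [hz]
        have hq0 : q ≠ 0 := by positivity
        field_simp
        ring
      | (k + 2) =>
        have ih1 := ih (k + 1) (by omega)
        have ih0 := ih k (by omega)
        have hrec := qF_rec hq (-q) k
        rcases Nat.even_or_odd k with ⟨c, hc⟩ | ⟨c, hc⟩
        · -- k = 2c even
          subst hc
          have e1 : (c + c + 2 + 1) / 2 = c + 1 := by omega
          have e2 : (c + c + 1 + 1) / 2 = c + 1 := by omega
          have e3 : (c + c + 1) / 2 = c := by omega
          rw [e1]
          rw [e2] at ih1
          rw [e3] at ih0
          have hpow1 : ((-1 : ℝ)) ^ (c + c) = 1 := by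
            rw [show c + c = 2 * c by ring, pow_mul]; norm_num
          have hpow2 : ((-1 : ℝ)) ^ (c + c + 1) = -1 := by
            rw [pow_succ, hpow1]; norm_num
          have hpow3 : ((-1 : ℝ)) ^ (c + c + 2) = 1 := by
            rw [pow_succ, hpow2]; norm_num
          rw [hpow2] at ih1
          rw [hpow1] at ih0
          rw [hpow3]
          have hP : (∏ j ∈ Finset.Icc 1 (c + 1), (1 - q ^ (1 - 2 * (j : ℤ))))
              = (∏ j ∈ Finset.Icc 1 c, (1 - q ^ (1 - 2 * (j : ℤ))))
                * (1 - q⁻¹ ^ (2 * c + 1)) := by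
            rw [Finset.prod_Icc_succ_top (by omega)]
            congr 2
            rw [show (1 - 2 * (((c+1):ℕ) : ℤ)) = -((2*c+1 : ℕ) : ℤ) by push_cast; ring,
                zpow_neg, zpow_natCast, ← inv_pow]
          rw [hP] at ih1 ⊢
          have hF1 : qF q (-q) (c + c + 1)
              = -(q ^ (c + c + 1) * ((∏ j ∈ Finset.Icc 1 c, (1 - q ^ (1 - 2 * (j : ℤ))))
                * (1 - q⁻¹ ^ (2 * c + 1)))) := by linarith [ih1]
          have hF0 : qF q (-q) (c + c)
              = q ^ (c + c) * ∏ j ∈ Finset.Icc 1 c, (1 - q ^ (1 - 2 * (j : ℤ))) := by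
            linarith [ih0]
          rw [show c + c + 2 = c + c + 1 + 1 by ring] at hrec ⊢
          rw [show (c + c : ℕ) + 1 + 1 = c + c + 2 by ring] at hrec ⊢
          rw [one_mul, hrec, hF1, hF0]
          have hexp : (c + c) + 1 = 2 * c + 1 := by ring
          rw [hexp]
          ring
        · -- k = 2c + 1 odd
          subst hc
          have e1 : (2 * c + 1 + 2 + 1) / 2 = c + 2 := by omega
          have e2 : (2 * c + 1 + 1 + 1) / 2 = c + 1 := by omega
          have e3 : (2 * c + 1 + 1) / 2 = c + 1 := by omega
          rw [e1]
          rw [e2] at ih1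
          rw [e3] at ih0
          have hpow1 : ((-1 : ℝ)) ^ (2 * c + 1) = -1 := by
            rw [pow_succ, pow_mul]; norm_num
          have hpow2 : ((-1 : ℝ)) ^ (2 * c + 1 + 1) = 1 := by
            rw [pow_succ, hpow1]; norm_num
          have hpow3 : ((-1 : ℝ)) ^ (2 * c + 1 + 2) = -1 := by
            rw [pow_succ, hpow2]; norm_num
          rw [hpow2] at ih1
          rw [hpow1] at ih0
          rw [hpow3]
          have hP : (∏ j ∈ Finset.Icc 1 (c + 2), (1 - q ^ (1 - 2 * (j : ℤ))))
              = (∏ j ∈ Finset.Icc 1 (c + 1), (1 - q ^ (1 - 2 * (j : ℤ))))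
                * (1 - q⁻¹ ^ (2 * c + 3)) := by
            rw [Finset.prod_Icc_succ_top (by omega)]
            congr 2
            rw [show (1 - 2 * (((c+2):ℕ) : ℤ)) = -((2*c+3 : ℕ) : ℤ) by push_cast; ring,
                zpow_neg, zpow_natCast, ← inv_pow]
          rw [hP]
          have hF1 : qF q (-q) (2 * c + 1 + 1)
              = q ^ (2 * c + 1 + 1) * ∏ j ∈ Finset.Icc 1 (c + 1), (1 - q ^ (1 - 2 * (j : ℤ))) := by
            linarith [ih1]
          have hF0 : qF q (-q) (2 * c + 1)
              = -(q ^ (2 * c + 1) * ∏ j ∈ Finset.Icc 1 (c + 1), (1 - q ^ (1 - 2 * (j : ℤ)))) := by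
            linarith [ih0]
          rw [show 2 * c + 1 + 2 = 2 * c + 1 + 1 + 1 by ring] at hrec ⊢
          rw [hrec, hF1, hF0]
          have hc1 : q⁻¹ ^ (2 * c + 1 + 1) * q ^ (2 * c + 1 + 1) = 1 := by
            rw [← mul_pow, inv_mul_cancel₀ hq0, one_pow]
          have hc2 : q⁻¹ ^ (2 * c + 3) * q ^ (2 * c + 3) = 1 := by
            rw [← mul_pow, inv_mul_cancel₀ hq0, one_pow]
          field_simp
          linear_combination (-(∏ j ∈ Finset.Icc 1 (c + 1), (1 - q ^ (1 - 2 * (j : ℤ))))) * hc1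
            + (∏ j ∈ Finset.Icc 1 (c + 1), (1 - q ^ (1 - 2 * (j : ℤ)))) * hc2
  rw [← key n]
  rw [qF, Finset.mul_sum]
  apply Finset.sum_congr rfl
  intro r hr
  have hrn : r ≤ n := Nat.lt_succ_iff.mp (Finset.mem_range.mp hr)
  rw [qB, if_pos hrn]
  have hs : ((-1 : ℝ)) ^ (n - r) = (-1) ^ n * (-1) ^ r := by
    rw [← pow_add, show n + r = (n - r) + 2 * r by omega, pow_add, pow_mul]
    norm_num
  rw [hs, neg_pow q r]
  ring
end

section
/- Let q be a real number with q > 1. For a natural number a write (1/q)_a = ∏_{j=1}^{a} (1 - q^{-j}) (with (1/q)_0 = 1). Then for every natural number n, ∑_{r=0}^{n} (-1)^{r} (1/q)_n / (q^r (1/q)_r (1/q)_{n-r}) = ∏_{j=1}^{⌈n/2⌉} (1 - q^{1-2j}). (Equivalently, the right side is (1-1/q)(1-1/q^3)⋯(1-1/q^{n-1}) if n is even and (1-1/q)(1-1/q^3)⋯(1-1/q^n) if n is odd.) -/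
noncomputable def myP (t : ℝ) (a : ℕ) : ℝ := ∏ j ∈ Finset.Icc 1 a, (1 - t ^ j)

noncomputable def myB (t : ℝ) (n r : ℕ) : ℝ :=
  if r ≤ n then myP t n / (myP t r * myP t (n - r)) else 0

noncomputable def myS (t : ℝ) (n : ℕ) : ℝ :=
  ∑ r ∈ Finset.range (n + 1), (-1 : ℝ) ^ r * t ^ r * myB t n r

noncomputable def myT (t : ℝ) (n : ℕ) : ℝ :=
  ∑ r ∈ Finset.range (n + 1), (-1 : ℝ) ^ r * myB t n r

noncomputable def myG (t : ℝ) (m : ℕ) : ℝ := ∏ j ∈ Finset.Icc 1 m, (1 - t ^ (2 * j - 1))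

lemma myP_zero (t : ℝ) : myP t 0 = 1 := by simp [myP]

lemma myP_succ (t : ℝ) (a : ℕ) : myP t (a + 1) = myP t a * (1 - t ^ (a + 1)) := by
  rw [myP, myP, Finset.prod_Icc_succ_top (by omega)]

lemma myP_pos {t : ℝ} (ht0 : 0 ≤ t) (ht1 : t < 1) (a : ℕ) : 0 < myP t a := by
  apply Finset.prod_pos
  intro j hj
  simp only [Finset.mem_Icc] at hj
  have : t ^ j < 1 := pow_lt_one₀ ht0 ht1 (by omega)
  linarith

lemma fac_pos {t : ℝ} (ht0 : 0 ≤ t) (ht1 : t < 1) (j : ℕ) (hj : 1 ≤ j) : 0 < 1 - t ^ j := by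
  have : t ^ j < 1 := pow_lt_one₀ ht0 ht1 (by omega)
  linarith

lemma myB_zero {t : ℝ} (ht0 : 0 ≤ t) (ht1 : t < 1) (n : ℕ) : myB t n 0 = 1 := by
  simp [myB, myP_zero, div_self (myP_pos ht0 ht1 n).ne']

lemma myB_diag {t : ℝ} (ht0 : 0 ≤ t) (ht1 : t < 1) (n : ℕ) : myB t n n = 1 := by
  simp [myB, myP_zero, div_self (myP_pos ht0 ht1 n).ne']

lemma myB_over (t : ℝ) {n r : ℕ} (h : n < r) : myB t n r = 0 := by
  simp [myB, Nat.not_le.mpr h]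

lemma pascal1 {t : ℝ} (ht0 : 0 ≤ t) (ht1 : t < 1) (n r : ℕ) :
    myB t (n + 1) (r + 1) = myB t n r + t ^ (r + 1) * myB t n (r + 1) := by
  rcases lt_trichotomy r n with h | h | h
  · obtain ⟨k, rfl⟩ : ∃ k, n = r + 1 + k := ⟨n - r - 1, by omega⟩
    have e1 : r + 1 + k + 1 - (r + 1) = k + 1 := by omega
    have e2 : r + 1 + k - r = k + 1 := by omega
    have e3 : r + 1 + k - (r + 1) = k := by omega
    simp only [myB, if_pos (by omega : r + 1 ≤ r + 1 + k + 1),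
      if_pos (by omega : r ≤ r + 1 + k), if_pos (by omega : r + 1 ≤ r + 1 + k), e1, e2, e3]
    have hPn := (myP_pos ht0 ht1 (r + 1 + k)).ne'
    have hPr := (myP_pos ht0 ht1 r).ne'
    have hPk := (myP_pos ht0 ht1 k).ne'
    have hf1 := (fac_pos ht0 ht1 (r + 1) (by omega)).ne'
    have hf2 := (fac_pos ht0 ht1 (k + 1) (by omega)).ne'
    rw [show r + 1 + k + 1 = (r + 1 + k) + 1 by ring, myP_succ t (r + 1 + k), myP_succ t r,
      myP_succ t k]
    field_simp
    ring
  · subst h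
    rw [myB_diag ht0 ht1, myB_diag ht0 ht1, myB_over t (by omega)]
    ring
  · rw [myB_over t (by omega), myB_over t (by omega), myB_over t (by omega)]
    ring

lemma pascal2 {t : ℝ} (ht0 : 0 ≤ t) (ht1 : t < 1) (n r : ℕ) :
    myB t (n + 1) (r + 1) = t ^ (n - r) * myB t n r + myB t n (r + 1) := by
  rcases lt_trichotomy r n with h | h | h
  · obtain ⟨k, rfl⟩ : ∃ k, n = r + 1 + k := ⟨n - r - 1, by omega⟩
    have e1 : r + 1 + k + 1 - (r + 1) = k + 1 := by omega
    have e2 : r + 1 + k - r = k + 1 := by omega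
    have e3 : r + 1 + k - (r + 1) = k := by omega
    simp only [myB, if_pos (by omega : r + 1 ≤ r + 1 + k + 1),
      if_pos (by omega : r ≤ r + 1 + k), if_pos (by omega : r + 1 ≤ r + 1 + k), e1, e2, e3]
    have hPn := (myP_pos ht0 ht1 (r + 1 + k)).ne'
    have hPr := (myP_pos ht0 ht1 r).ne'
    have hPk := (myP_pos ht0 ht1 k).ne'
    have hf1 := (fac_pos ht0 ht1 (r + 1) (by omega)).ne'
    have hf2 := (fac_pos ht0 ht1 (k + 1) (by omega)).ne'
    rw [show r + 1 + k + 1 = (r + 1 + k) + 1 by ring, myP_succ t (r + 1 + k), myP_succ t r,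
      myP_succ t k]
    field_simp
    ring
  · subst h
    rw [myB_diag ht0 ht1, myB_diag ht0 ht1, myB_over t (by omega)]
    simp
  · rw [myB_over t (by omega), myB_over t (by omega), myB_over t (by omega)]
    ring

lemma aux_sum {t : ℝ} (ht0 : 0 ≤ t) (ht1 : t < 1) (n : ℕ) :
    ∑ i ∈ Finset.range (n + 1), (-1 : ℝ) ^ i * t ^ (i + 1) * myB t n (i + 1)
      = 1 - myS t n := by
  have key : ∑ i ∈ Finset.range n, (-1 : ℝ) ^ (i + 1) * t ^ (i + 1) * myB t n (i + 1)
      = -∑ i ∈ Finset.range n, (-1 : ℝ) ^ i * t ^ (i + 1) * myB t n (i + 1) := by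
    rw [← Finset.sum_neg_distrib]
    exact Finset.sum_congr rfl (fun i _ => by ring)
  rw [Finset.sum_range_succ, myB_over t (by omega), mul_zero, add_zero,
    myS, Finset.sum_range_succ', key, pow_zero, pow_zero, myB_zero ht0 ht1]
  ring

lemma S_succ {t : ℝ} (ht0 : 0 ≤ t) (ht1 : t < 1) (n : ℕ) :
    myS t (n + 1) = myS t n - t ^ (n + 1) * myT t n := by
  rw [myS, Finset.sum_range_succ']
  have step : ∀ i ∈ Finset.range (n + 1),
      (-1 : ℝ) ^ (i + 1) * t ^ (i + 1) * myB t (n + 1) (i + 1)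
        = -(t ^ (n + 1) * ((-1 : ℝ) ^ i * myB t n i))
          - (-1 : ℝ) ^ i * t ^ (i + 1) * myB t n (i + 1) := by
    intro i hi
    simp only [Finset.mem_range] at hi
    rw [pascal2 ht0 ht1 n i]
    have : t ^ (i + 1) * t ^ (n - i) = t ^ (n + 1) := by
      rw [← pow_add]; congr 1; omega
    calc (-1 : ℝ) ^ (i + 1) * t ^ (i + 1) * (t ^ (n - i) * myB t n i + myB t n (i + 1))
        = -(t ^ (i + 1) * t ^ (n - i) * ((-1 : ℝ) ^ i * myB t n i))
          - (-1 : ℝ) ^ i * t ^ (i + 1) * myB t n (i + 1) := by ring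
      _ = _ := by rw [this]
  rw [Finset.sum_congr rfl step, Finset.sum_sub_distrib, Finset.sum_neg_distrib,
    ← Finset.mul_sum, aux_sum ht0 ht1, pow_zero, pow_zero, myB_zero ht0 ht1, ← myT]
  ring

lemma aux_sum' {t : ℝ} (ht0 : 0 ≤ t) (ht1 : t < 1) (n : ℕ) :
    ∑ i ∈ Finset.range (n + 1), (-1 : ℝ) ^ i * t ^ (i + 1) * myB t n (i + 1)
      = 1 - myS t n := aux_sum ht0 ht1 n

lemma T_succ {t : ℝ} (ht0 : 0 ≤ t) (ht1 : t < 1) (n : ℕ) :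
    myT t (n + 1) = myS t n - myT t n := by
  rw [myT, Finset.sum_range_succ']
  have step : ∀ i ∈ Finset.range (n + 1),
      (-1 : ℝ) ^ (i + 1) * myB t (n + 1) (i + 1)
        = -((-1 : ℝ) ^ i * myB t n i)
          - (-1 : ℝ) ^ i * t ^ (i + 1) * myB t n (i + 1) := by
    intro i _
    rw [pascal1 ht0 ht1 n i]
    ring
  rw [Finset.sum_congr rfl step, Finset.sum_sub_distrib, Finset.sum_neg_distrib,
    aux_sum ht0 ht1, pow_zero, myB_zero ht0 ht1, ← myT]
  ring

lemma myG_succ (t : ℝ) (m : ℕ) : myG t (m + 1) = myG t m * (1 - t ^ (2 * m + 1)) := by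
  rw [myG, myG, Finset.prod_Icc_succ_top (by omega)]
  congr 2

lemma main_ind {t : ℝ} (ht0 : 0 ≤ t) (ht1 : t < 1) (n : ℕ) :
    myS t n = myG t ((n + 1) / 2) ∧ myT t n = if Even n then myG t (n / 2) else 0 := by
  induction n with
  | zero =>
    constructor
    · simp [myS, myG, myB_zero ht0 ht1]
    · simp [myT, myG, myB_zero ht0 ht1]
  | succ n ih =>
    obtain ⟨hS, hT⟩ := ih
    rcases Nat.even_or_odd n with he | ho
    · obtain ⟨m, rfl⟩ : ∃ m, n = 2 * m := by obtain ⟨m, rfl⟩ := he; exact ⟨m, by ring⟩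
      have hT' : myT t (2 * m) = myG t m := by
        rw [hT, if_pos (by exact ⟨m, by ring⟩)]
        congr 1; omega
      have hS' : myS t (2 * m) = myG t m := by
        rw [hS]; congr 1; omega
      constructor
      · rw [S_succ ht0 ht1, hS', hT', show (2 * m + 1 + 1) / 2 = m + 1 by omega,
          myG_succ]
        ring
      · rw [T_succ ht0 ht1, hS', hT', if_neg (by simp [Nat.even_add_one, parity_simps])]
        ring
    · obtain ⟨m, rfl⟩ : ∃ m, n = 2 * m + 1 := by obtain ⟨m, rfl⟩ := ho; exact ⟨m, rfl⟩
      have hT' : myT t (2 * m + 1) = 0 := by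
        rw [hT, if_neg (by simp [Nat.even_add_one, parity_simps])]
      have hS' : myS t (2 * m + 1) = myG t (m + 1) := by
        rw [hS]; congr 1; omega
      constructor
      · rw [S_succ ht0 ht1, hS', hT', show (2 * m + 1 + 1 + 1) / 2 = m + 1 by omega]
        ring
      · rw [T_succ ht0 ht1, hS', hT', if_pos (by exact ⟨m + 1, by ring⟩),
          show (2 * m + 1 + 1) / 2 = m + 1 by omega]
        ring

theorem stmt1 (q : ℝ) (hq : 1 < q) (n : ℕ) :
    ∑ r ∈ Finset.range (n + 1),
      (-1 : ℝ) ^ r * qPoch q n / (q ^ r * qPoch q r * qPoch q (n - r)) =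
    ∏ j ∈ Finset.Icc 1 ((n + 1) / 2), (1 - q ^ (1 - 2 * (j : ℤ))) := by
  have hq0 : (0 : ℝ) < q := by linarith
  set t : ℝ := q⁻¹ with htdef
  have ht0 : 0 ≤ t := by positivity
  have ht1 : t < 1 := by
    rw [htdef, inv_lt_one_iff₀]; right; exact hq
  have hqP : ∀ a, qPoch q a = myP t a := fun a => rfl
  have hL : ∑ r ∈ Finset.range (n + 1),
      (-1 : ℝ) ^ r * qPoch q n / (q ^ r * qPoch q r * qPoch q (n - r)) = myS t n := by
    rw [myS]
    apply Finset.sum_congr rfl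
    intro r hr
    simp only [Finset.mem_range] at hr
    rw [hqP, hqP, hqP, myB, if_pos (by omega : r ≤ n)]
    have h1 : (q : ℝ) ^ r ≠ 0 := by positivity
    have h2 := (myP_pos ht0 ht1 r).ne'
    have h3 := (myP_pos ht0 ht1 (n - r)).ne'
    rw [htdef, inv_pow]
    field_simp
  rw [hL, (main_ind ht0 ht1 n).1, myG]
  apply Finset.prod_congr rfl
  intro j hj
  simp only [Finset.mem_Icc] at hj
  congr 1
  have : (1 : ℤ) - 2 * (j : ℤ) = -((2 * j - 1 : ℕ) : ℤ) := by
    omega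
  rw [this, zpow_neg, zpow_natCast, htdef, inv_pow]
end

section
/- Let q be a prime power and n ≥ 1. The number of invertible symmetric n×n matrices over F_q (equivalently, the number of g ∈ GL(n,F_q) with g·g^τ = 1) equals ∏_{i=1}^{n} c_i, where c_i = q^i - 1 if i is odd and c_i = q^i if i is even; that is, it equals (q-1)·q^2·(q^3-1)·q^4·(q^5-1)⋯ with n factors altogether. -/
open Matrix

/-- The inverse-transpose automorphism of `GL(n,F)`: `g ↦ (gᵀ)⁻¹`. -/
noncomputable def tau {n : ℕ} {F : Type} [Field F] (g : GL (Fin n) F) : GL (Fin n) F where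
  val := (g⁻¹).val.transpose
  inv := g.val.transpose
  val_inv := by
    rw [← Matrix.transpose_mul, ← Units.val_mul, mul_inv_cancel, Units.val_one,
      Matrix.transpose_one]
  inv_val := by
    rw [← Matrix.transpose_mul, ← Units.val_mul, inv_mul_cancel, Units.val_one,
      Matrix.transpose_one]

attribute [local instance] Classical.propDecidable

noncomputable abbrev NSym (ι : Type) [Fintype ι] [DecidableEq ι] (F : Type) [Field F] : ℕ :=
  Nat.card {S : Matrix ι ι F // Sᵀ = S ∧ IsUnit S}

variable {F : Type} [Field F] [Fintype F]

lemma NSym_reindex {ι κ : Type} [Fintype ι] [DecidableEq ι] [Fintype κ] [DecidableEq κ]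
    (e : ι ≃ κ) : NSym ι F = NSym κ F := by
  refine Nat.card_congr (Equiv.subtypeEquiv ((Matrix.reindexAlgEquiv F F e).toEquiv) ?_)
  intro S
  simp only [Matrix.reindexAlgEquiv_apply, AlgEquiv.toEquiv_eq_coe, EquivLike.coe_coe]
  constructor
  · rintro ⟨h1, h2⟩
    refine ⟨?_, ?_⟩
    · rw [Matrix.reindex_apply, Matrix.transpose_submatrix, h1]
    · rw [Matrix.reindex_apply]
      exact (Matrix.isUnit_submatrix_equiv _ _).mpr h2
  · rintro ⟨h1, h2⟩
    constructor
    · rw [Matrix.transpose_reindex] at h1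
      exact (Matrix.reindex e e).injective h1
    · rw [Matrix.reindex_apply] at h2
      exact (Matrix.isUnit_submatrix_equiv _ _).mp h2

lemma nat_card_fiber {α B : Type*} [Finite α] [Fintype B] (f : α → B) :
    Nat.card α = ∑ b : B, Nat.card {a : α // f a = b} := by
  classical
  cases nonempty_fintype α
  calc Nat.card α = Nat.card (Σ b, {a : α // f a = b}) :=
        Nat.card_congr (Equiv.sigmaFiberEquiv f).symm
    _ = ∑ b : B, Nat.card {a : α // f a = b} := by
        rw [Nat.card_eq_fintype_card, Fintype.card_sigma]
        exact Finset.sum_congr rfl fun b _ => (Nat.card_eq_fintype_card).symm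


set_option linter.unusedSectionVars false

lemma invOf_symm {ι : Type} [Fintype ι] [DecidableEq ι] (A : Matrix ι ι F) (hA : Aᵀ = A)
    [Invertible A] : (⅟A)ᵀ = ⅟A := by
  letI : Invertible Aᵀ := by rw [hA]; infer_instance
  rw [Matrix.transpose_invOf, Matrix.invOf_eq_nonsing_inv, Matrix.invOf_eq_nonsing_inv, hA]

lemma symm_toBlocks₁₂ {ι κ : Type} (S : Matrix (ι ⊕ κ) (ι ⊕ κ) F) (h : Sᵀ = S) :
    S.toBlocks₁₂ = (S.toBlocks₂₁)ᵀ := by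
  ext i j
  exact congrFun (congrFun h.symm (Sum.inl i)) (Sum.inr j)

noncomputable def schurEquiv {ι κ : Type} [Fintype ι] [DecidableEq ι] [Fintype κ]
    [DecidableEq κ] (A : Matrix ι ι F) (hA : Aᵀ = A) [Invertible A] :
    {S : Matrix (ι ⊕ κ) (ι ⊕ κ) F // Sᵀ = S ∧ IsUnit S ∧ S.toBlocks₁₁ = A} ≃
      (Matrix κ ι F × {T : Matrix κ κ F // Tᵀ = T ∧ IsUnit T}) where
  toFun S := ⟨S.1.toBlocks₂₁, ⟨S.1.toBlocks₂₂ - S.1.toBlocks₂₁ * ⅟A * (S.1.toBlocks₂₁)ᵀ, by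
      obtain ⟨h1, h2, h3⟩ := S.2
      constructor
      · have hD : (S.1.toBlocks₂₂)ᵀ = S.1.toBlocks₂₂ := by
          ext i j
          exact congrFun (congrFun h1 (Sum.inr i)) (Sum.inr j)
        rw [Matrix.transpose_sub, hD, Matrix.transpose_mul, Matrix.transpose_mul,
          Matrix.transpose_transpose, invOf_symm A hA, ← Matrix.mul_assoc]
      · have hS : S.1 = Matrix.fromBlocks A (S.1.toBlocks₂₁)ᵀ S.1.toBlocks₂₁ S.1.toBlocks₂₂ := by
          conv_lhs => rw [← Matrix.fromBlocks_toBlocks S.1]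
          rw [h3, symm_toBlocks₁₂ S.1 h1]
        rw [hS] at h2
        exact (Matrix.isUnit_fromBlocks_iff_of_invertible₁₁).mp h2⟩⟩
  invFun CT := ⟨Matrix.fromBlocks A (CT.1)ᵀ CT.1 (CT.2.1 + CT.1 * ⅟A * (CT.1)ᵀ), by
      refine ⟨?_, ?_, ?_⟩
      · rw [Matrix.fromBlocks_transpose, hA, Matrix.transpose_transpose]
        congr 1
        rw [Matrix.transpose_add, CT.2.2.1, Matrix.transpose_mul, Matrix.transpose_mul,
          Matrix.transpose_transpose, invOf_symm A hA, Matrix.mul_assoc]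
      · rw [Matrix.isUnit_fromBlocks_iff_of_invertible₁₁, add_sub_cancel_right]
        exact CT.2.2.2
      · simp⟩
  left_inv S := by
    obtain ⟨h1, h2, h3⟩ := S.2
    ext1
    simp only [sub_add_cancel]
    conv_rhs => rw [← Matrix.fromBlocks_toBlocks S.1]
    rw [h3, symm_toBlocks₁₂ S.1 h1]
  right_inv CT := by
    ext1
    · simp
    · ext1
      simp [add_sub_cancel_right]

lemma count_fixed_block {ι κ : Type} [Fintype ι] [DecidableEq ι] [Fintype κ]
    [DecidableEq κ] (A : Matrix ι ι F) (hA : Aᵀ = A) [Invertible A]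
    (p : Matrix κ ι F → Prop) :
    Nat.card {S : Matrix (ι ⊕ κ) (ι ⊕ κ) F //
        (Sᵀ = S ∧ IsUnit S ∧ S.toBlocks₁₁ = A) ∧ p S.toBlocks₂₁} =
      Nat.card {C : Matrix κ ι F // p C} * NSym κ F := by
  have e2 : {S : Matrix (ι ⊕ κ) (ι ⊕ κ) F //
      (Sᵀ = S ∧ IsUnit S ∧ S.toBlocks₁₁ = A) ∧ p S.toBlocks₂₁} ≃
      {x : Matrix κ ι F × {T : Matrix κ κ F // Tᵀ = T ∧ IsUnit T} // p x.1} := by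
    exact (Equiv.subtypeEquivRight (fun S => exists_prop.symm)).trans
      ((Equiv.subtypeSubtypeEquivSubtypeExists
          (fun S : Matrix (ι ⊕ κ) (ι ⊕ κ) F => Sᵀ = S ∧ IsUnit S ∧ S.toBlocks₁₁ = A)
          (fun s => p s.1.toBlocks₂₁)).symm.trans
        (Equiv.subtypeEquiv (p := fun s => p s.1.toBlocks₂₁) (q := fun x => p x.1)
          (schurEquiv (κ := κ) A hA) (fun s => Iff.rfl)))
  rw [Nat.card_congr e2, Nat.card_congr (Equiv.prodSubtypeFstEquivSubtypeProd), Nat.card_prod]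

set_option maxHeartbeats 800000 in
lemma exists_invertible_mulVec {κ : Type} [Fintype κ] [DecidableEq κ] (k₀ : κ)
    (b : κ → F) (hb : b ≠ 0) :
    ∃ g : Matrix κ κ F, IsUnit g ∧ g.mulVec (Pi.single k₀ 1) = b := by
  have hs : LinearIndepOn F id ({b} : Set (κ → F)) :=
    LinearIndepOn.singleton hb
  let B := hs.extend (Set.subset_univ _)
  let Bas := Module.Basis.extend hs
  have hbB : b ∈ B := hs.subset_extend _ rfl
  haveI : Fintype B := FiniteDimensional.fintypeBasisIndex Bas
  have hcard : Fintype.card B = Fintype.card κ := by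
    rw [← Module.finrank_eq_card_basis Bas, Module.finrank_fintype_fun_eq_card]
  obtain ⟨e⟩ : Nonempty (κ ≃ B) := by
    exact ⟨(Fintype.equivOfCardEq hcard.symm)⟩
  let e' : κ ≃ B := (Equiv.swap k₀ (e.symm ⟨b, hbB⟩)).trans e
  have he' : e' k₀ = ⟨b, hbB⟩ := by
    simp [e', Equiv.swap_apply_left]
  let B' : Module.Basis κ F (κ → F) := Bas.reindex e'.symm
  have hB' : B' k₀ = b := by
    rw [Module.Basis.reindex_apply, Equiv.symm_symm, he']
    exact Module.Basis.extend_apply_self hs ⟨b, hbB⟩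
  let P : Matrix κ κ F := (Pi.basisFun F κ).toMatrix B'
  haveI : Invertible P := Module.Basis.invertibleToMatrix (Pi.basisFun F κ) B'
  refine ⟨P, isUnit_of_invertible P, ?_⟩
  rw [Matrix.mulVec_single]
  funext i
  simp only [mul_one, P, MulOpposite.op_one, one_smul, Matrix.col_apply, Module.Basis.toMatrix_apply, Pi.basisFun_repr, hB']

section Conj
variable {κ : Type} [Fintype κ] [DecidableEq κ]

def colf (S : Matrix (Fin 1 ⊕ κ) (Fin 1 ⊕ κ) F) : κ → F :=
  fun k => S (Sum.inr k) (Sum.inl 0)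

def Pg (g : Matrix κ κ F) : Matrix (Fin 1 ⊕ κ) (Fin 1 ⊕ κ) F :=
  Matrix.fromBlocks 1 0 0 g

lemma Pg_mul (g h : Matrix κ κ F) : Pg g * Pg h = Pg (g * h) := by
  simp [Pg, Matrix.fromBlocks_multiply]

lemma Pg_one : Pg (1 : Matrix κ κ F) = 1 := by
  simp [Pg, Matrix.fromBlocks_one]

lemma Pg_mul_mul (g : Matrix κ κ F) (S : Matrix (Fin 1 ⊕ κ) (Fin 1 ⊕ κ) F) :
    Pg g * S * (Pg g)ᵀ = Matrix.fromBlocks S.toBlocks₁₁ (S.toBlocks₁₂ * gᵀ)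
      (g * S.toBlocks₂₁) (g * S.toBlocks₂₂ * gᵀ) := by
  conv_lhs => rw [← Matrix.fromBlocks_toBlocks S]
  rw [Pg, Matrix.fromBlocks_transpose, Matrix.transpose_one, Matrix.transpose_zero,
    Matrix.fromBlocks_multiply, Matrix.fromBlocks_multiply]
  simp [Matrix.mul_assoc]

lemma conj_mem (g : Matrix κ κ F) (hg : IsUnit g) (b : κ → F)
    (S : Matrix (Fin 1 ⊕ κ) (Fin 1 ⊕ κ) F)
    (h : (Sᵀ = S ∧ IsUnit S) ∧ S (Sum.inl 0) (Sum.inl 0) = 0 ∧ colf S = b) :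
    ((Pg g * S * (Pg g)ᵀ)ᵀ = Pg g * S * (Pg g)ᵀ ∧ IsUnit (Pg g * S * (Pg g)ᵀ)) ∧
      (Pg g * S * (Pg g)ᵀ) (Sum.inl 0) (Sum.inl 0) = 0 ∧
      colf (Pg g * S * (Pg g)ᵀ) = g.mulVec b := by
  obtain ⟨⟨h1, h2⟩, h3, h4⟩ := h
  have hPu : IsUnit (Pg g) := by
    rw [Pg, Matrix.isUnit_iff_isUnit_det, Matrix.det_fromBlocks_zero₂₁,
      Matrix.det_one, one_mul, ← Matrix.isUnit_iff_isUnit_det]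
    exact hg
  refine ⟨⟨?_, ?_⟩, ?_, ?_⟩
  · rw [Matrix.transpose_mul, Matrix.transpose_mul, Matrix.transpose_transpose, h1,
      Matrix.mul_assoc]
  · refine (hPu.mul h2).mul ?_
    rw [Matrix.isUnit_iff_isUnit_det, Matrix.det_transpose, ← Matrix.isUnit_iff_isUnit_det]
    exact hPu
  · rw [Pg_mul_mul]
    simpa [Matrix.fromBlocks, Matrix.toBlocks₁₁] using h3
  · funext k
    rw [Pg_mul_mul]
    simp only [colf, Matrix.fromBlocks, Matrix.of_apply, Sum.elim_inr, Sum.elim_inl]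
    rw [← h4]
    simp [Matrix.mulVec, Matrix.mul_apply, dotProduct, colf, Matrix.toBlocks₂₁]

lemma card_col_eq (g : Matrix κ κ F) [Invertible g] (b : κ → F) :
    Nat.card {S : Matrix (Fin 1 ⊕ κ) (Fin 1 ⊕ κ) F //
        (Sᵀ = S ∧ IsUnit S) ∧ S (Sum.inl 0) (Sum.inl 0) = 0 ∧ colf S = b} =
      Nat.card {S : Matrix (Fin 1 ⊕ κ) (Fin 1 ⊕ κ) F //
        (Sᵀ = S ∧ IsUnit S) ∧ S (Sum.inl 0) (Sum.inl 0) = 0 ∧ colf S = g.mulVec b} := by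
  have hcancel : ∀ S : Matrix (Fin 1 ⊕ κ) (Fin 1 ⊕ κ) F,
      Pg (⅟g) * (Pg g * S * (Pg g)ᵀ) * (Pg (⅟g))ᵀ = S := by
    intro S
    calc Pg (⅟g) * (Pg g * S * (Pg g)ᵀ) * (Pg (⅟g))ᵀ
        = (Pg (⅟g) * Pg g) * S * ((Pg (⅟g) * Pg g)ᵀ)ᵀᵀ := by
          rw [Matrix.transpose_mul]
          rw [Matrix.transpose_transpose]
          noncomm_ring [Matrix.mul_assoc]
      _ = S := by
          rw [Pg_mul, invOf_mul_self, Pg_one]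
          simp
  have hcancel2 : ∀ S : Matrix (Fin 1 ⊕ κ) (Fin 1 ⊕ κ) F,
      Pg g * (Pg (⅟g) * S * (Pg (⅟g))ᵀ) * (Pg g)ᵀ = S := by
    intro S
    calc Pg g * (Pg (⅟g) * S * (Pg (⅟g))ᵀ) * (Pg g)ᵀ
        = (Pg g * Pg (⅟g)) * S * ((Pg g * Pg (⅟g))ᵀ)ᵀᵀ := by
          rw [Matrix.transpose_mul]
          rw [Matrix.transpose_transpose]
          noncomm_ring [Matrix.mul_assoc]
      _ = S := by
          rw [Pg_mul, mul_invOf_self, Pg_one]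
          simp
  have hb' : (⅟g).mulVec (g.mulVec b) = b := by
    rw [Matrix.mulVec_mulVec, invOf_mul_self, Matrix.one_mulVec]
  refine Nat.card_congr ⟨fun S => ⟨Pg g * S.1 * (Pg g)ᵀ, conj_mem g (isUnit_of_invertible g) b S.1 S.2⟩,
    fun S => ⟨Pg (⅟g) * S.1 * (Pg (⅟g))ᵀ, by
      have := conj_mem (⅟g) (isUnit_of_invertible (⅟g)) (g.mulVec b) S.1 S.2
      rwa [hb'] at this⟩, ?_, ?_⟩
  · intro S; exact Subtype.ext (hcancel S.1)
  · intro S; exact Subtype.ext (hcancel2 S.1)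

end Conj

lemma card_true_matrix {κ : Type} [Fintype κ] [DecidableEq κ] :
    Nat.card {C : Matrix κ (Fin 1) F // (fun _ => True) C} =
      Fintype.card F ^ Fintype.card κ := by
  rw [Nat.card_congr (Equiv.subtypeUnivEquiv (fun _ => trivial))]
  have e : Matrix κ (Fin 1) F ≃ (κ → F) :=
    ⟨fun C k => C k 0, fun v => Matrix.of fun k _ => v k, fun C => by
      ext k i; have : i = 0 := Subsingleton.elim i 0; rw [this]; rfl, fun v => rfl⟩
  rw [Nat.card_congr e, Nat.card_fun, Nat.card_eq_fintype_card, Nat.card_eq_fintype_card]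

lemma caseA {κ : Type} [Fintype κ] [DecidableEq κ] (c : F) (hc : c ≠ 0) :
    Nat.card {S : Matrix (Fin 1 ⊕ κ) (Fin 1 ⊕ κ) F //
        (Sᵀ = S ∧ IsUnit S) ∧ S (Sum.inl 0) (Sum.inl 0) = c} =
      Fintype.card F ^ Fintype.card κ * NSym κ F := by
  set A : Matrix (Fin 1) (Fin 1) F := Matrix.of fun _ _ => c with hAdef
  have hA : Aᵀ = A := by ext i j; rfl
  haveI : Invertible A := A.invertibleOfIsUnitDet (by
    rw [Matrix.det_fin_one]; exact (isUnit_iff_ne_zero).mpr hc)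
  have e : {S : Matrix (Fin 1 ⊕ κ) (Fin 1 ⊕ κ) F //
      (Sᵀ = S ∧ IsUnit S) ∧ S (Sum.inl 0) (Sum.inl 0) = c} ≃
      {S : Matrix (Fin 1 ⊕ κ) (Fin 1 ⊕ κ) F //
      (Sᵀ = S ∧ IsUnit S ∧ S.toBlocks₁₁ = A) ∧ (fun _ => True) S.toBlocks₂₁} := by
    refine Equiv.subtypeEquivRight (fun S => ?_)
    constructor
    · rintro ⟨⟨h1, h2⟩, h3⟩
      refine ⟨⟨h1, h2, ?_⟩, trivial⟩
      ext i j
      have hi : i = 0 := Subsingleton.elim i 0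
      have hj : j = 0 := Subsingleton.elim j 0
      rw [hi, hj]
      exact h3
    · rintro ⟨⟨h1, h2, h3⟩, -⟩
      exact ⟨⟨h1, h2⟩, congrFun (congrFun h3 0) 0⟩
  rw [Nat.card_congr e, count_fixed_block A hA (fun _ => True), card_true_matrix]

def Amat (d : F) : Matrix (Fin 1 ⊕ Fin 1) (Fin 1 ⊕ Fin 1) F :=
  Matrix.fromBlocks (Matrix.of fun _ _ => 0) (Matrix.of fun _ _ => 1)
    (Matrix.of fun _ _ => 1) (Matrix.of fun _ _ => d)

lemma Amat_symm (d : F) : (Amat d)ᵀ = Amat d := by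
  ext i j
  cases i <;> cases j <;> rfl

noncomputable def Amat_invertible (d : F) : Invertible (Amat d) := by
  refine ⟨Matrix.fromBlocks (Matrix.of fun _ _ => -d) (Matrix.of fun _ _ => 1)
    (Matrix.of fun _ _ => 1) (Matrix.of fun _ _ => 0), ?_, ?_⟩ <;>
  · rw [Amat, Matrix.fromBlocks_multiply]
    ext i j
    cases i <;> cases j <;>
      simp [Matrix.fromBlocks, Matrix.mul_apply, Matrix.one_apply, Fin.sum_univ_one,
        Subsingleton.elim _ (0 : Fin 1)] <;> ring_nf <;> simp [Sum.inl.injEq]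

lemma card_colzero_matrix (n : ℕ) :
    Nat.card {C : Matrix (Fin n) (Fin 1 ⊕ Fin 1) F //
        (fun C : Matrix (Fin n) (Fin 1 ⊕ Fin 1) F => ∀ j, C j (Sum.inl 0) = 0) C} =
      Fintype.card F ^ n := by
  have e : {C : Matrix (Fin n) (Fin 1 ⊕ Fin 1) F // ∀ j, C j (Sum.inl 0) = 0} ≃
      (Fin n → F) := by
    refine ⟨fun C j => C.1 j (Sum.inr 0), fun v =>
      ⟨Matrix.of fun j i => Sum.elim (fun _ => (0:F)) (fun _ => v j) i, fun j => rfl⟩,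
      fun C => ?_, fun v => rfl⟩
    ext j i
    cases i with
    | inl a =>
      have : a = 0 := Subsingleton.elim a 0
      rw [this]
      exact (C.2 j).symm
    | inr a =>
      have : a = 0 := Subsingleton.elim a 0
      rw [this]
      rfl
  rw [Nat.card_congr e, Nat.card_fun, Nat.card_eq_fintype_card, Nat.card_eq_fintype_card,
    Fintype.card_fin]

lemma reindex_symm_unit_iff {ι κ : Type} [Fintype ι] [DecidableEq ι] [Fintype κ]
    [DecidableEq κ] (σ : ι ≃ κ) (S : Matrix ι ι F) :
    (Sᵀ = S ∧ IsUnit S) ↔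
      ((Matrix.reindex σ σ S)ᵀ = Matrix.reindex σ σ S ∧ IsUnit (Matrix.reindex σ σ S)) := by
  constructor
  · rintro ⟨h1, h2⟩
    refine ⟨?_, ?_⟩
    · rw [Matrix.transpose_reindex, h1]
    · rw [Matrix.reindex_apply]
      exact (Matrix.isUnit_submatrix_equiv _ _).mpr h2
  · rintro ⟨h1, h2⟩
    constructor
    · rw [Matrix.transpose_reindex] at h1
      exact (Matrix.reindex σ σ).injective h1
    · rw [Matrix.reindex_apply] at h2
      exact (Matrix.isUnit_submatrix_equiv _ _).mp h2

lemma caseB_single (n : ℕ) :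
    Nat.card {S : Matrix (Fin 1 ⊕ (Fin 1 ⊕ Fin n)) (Fin 1 ⊕ (Fin 1 ⊕ Fin n)) F //
        (Sᵀ = S ∧ IsUnit S) ∧ S (Sum.inl 0) (Sum.inl 0) = 0 ∧
          colf S = Pi.single (Sum.inl 0) 1} =
      Fintype.card F ^ (n + 1) * NSym (Fin n) F := by
  set σ : (Fin 1 ⊕ (Fin 1 ⊕ Fin n)) ≃ ((Fin 1 ⊕ Fin 1) ⊕ Fin n) :=
    (Equiv.sumAssoc (Fin 1) (Fin 1) (Fin n)).symm with hσ
  have hcol : ∀ S : Matrix (Fin 1 ⊕ (Fin 1 ⊕ Fin n)) (Fin 1 ⊕ (Fin 1 ⊕ Fin n)) F,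
      (colf S = Pi.single (Sum.inl 0) (1:F)) ↔
        (S (Sum.inr (Sum.inl 0)) (Sum.inl 0) = 1 ∧
          ∀ j : Fin n, S (Sum.inr (Sum.inr j)) (Sum.inl 0) = 0) := by
    intro S
    rw [funext_iff]
    constructor
    · intro h
      refine ⟨by simpa [colf, Pi.single_apply] using h (Sum.inl 0),
        fun j => by simpa [colf, Pi.single_apply] using h (Sum.inr j)⟩
    · rintro ⟨h1, h2⟩ k
      cases k with
      | inl a =>
        have : a = 0 := Subsingleton.elim a 0
        subst this
        simpa [colf, Pi.single_apply] using h1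
      | inr j =>
        simpa [colf, Pi.single_apply] using h2 j
  have e1 : {S : Matrix (Fin 1 ⊕ (Fin 1 ⊕ Fin n)) (Fin 1 ⊕ (Fin 1 ⊕ Fin n)) F //
      (Sᵀ = S ∧ IsUnit S) ∧ S (Sum.inl 0) (Sum.inl 0) = 0 ∧
        colf S = Pi.single (Sum.inl 0) 1} ≃
      {S' : Matrix ((Fin 1 ⊕ Fin 1) ⊕ Fin n) ((Fin 1 ⊕ Fin 1) ⊕ Fin n) F //
      (S'ᵀ = S' ∧ IsUnit S') ∧ S' (Sum.inl (Sum.inl 0)) (Sum.inl (Sum.inl 0)) = 0 ∧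
        S' (Sum.inl (Sum.inr 0)) (Sum.inl (Sum.inl 0)) = 1 ∧
        ∀ j : Fin n, S' (Sum.inr j) (Sum.inl (Sum.inl 0)) = 0} := by
    refine Equiv.subtypeEquiv (Matrix.reindexAlgEquiv F F σ).toEquiv (fun S => ?_)
    simp only [Matrix.reindexAlgEquiv_apply, AlgEquiv.toEquiv_eq_coe, EquivLike.coe_coe]
    rw [hcol S]
    refine Iff.and (reindex_symm_unit_iff σ S) (Iff.and ?_ (Iff.and ?_ ?_)) <;>
      simp [hσ, Matrix.reindex_apply, Matrix.submatrix_apply]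
  rw [Nat.card_congr e1]
  rw [nat_card_fiber (fun S => S.1 (Sum.inl (Sum.inr 0)) (Sum.inl (Sum.inr 0)))]
  have hfib : ∀ d : F,
      Nat.card {S : {S' : Matrix ((Fin 1 ⊕ Fin 1) ⊕ Fin n) ((Fin 1 ⊕ Fin 1) ⊕ Fin n) F //
        (S'ᵀ = S' ∧ IsUnit S') ∧ S' (Sum.inl (Sum.inl 0)) (Sum.inl (Sum.inl 0)) = 0 ∧
        S' (Sum.inl (Sum.inr 0)) (Sum.inl (Sum.inl 0)) = 1 ∧
        ∀ j : Fin n, S' (Sum.inr j) (Sum.inl (Sum.inl 0)) = 0} //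
          S.1 (Sum.inl (Sum.inr 0)) (Sum.inl (Sum.inr 0)) = d} =
      Fintype.card F ^ n * NSym (Fin n) F := by
    intro d
    haveI := Amat_invertible (F := F) d
    rw [Nat.card_congr (Equiv.subtypeSubtypeEquivSubtypeInter
      (fun S' : Matrix ((Fin 1 ⊕ Fin 1) ⊕ Fin n) ((Fin 1 ⊕ Fin 1) ⊕ Fin n) F =>
        (S'ᵀ = S' ∧ IsUnit S') ∧ S' (Sum.inl (Sum.inl 0)) (Sum.inl (Sum.inl 0)) = 0 ∧
        S' (Sum.inl (Sum.inr 0)) (Sum.inl (Sum.inl 0)) = 1 ∧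
        ∀ j : Fin n, S' (Sum.inr j) (Sum.inl (Sum.inl 0)) = 0)
      (fun S' => S' (Sum.inl (Sum.inr 0)) (Sum.inl (Sum.inr 0)) = d))]
    have e2 : {S' : Matrix ((Fin 1 ⊕ Fin 1) ⊕ Fin n) ((Fin 1 ⊕ Fin 1) ⊕ Fin n) F //
        ((S'ᵀ = S' ∧ IsUnit S') ∧ S' (Sum.inl (Sum.inl 0)) (Sum.inl (Sum.inl 0)) = 0 ∧
        S' (Sum.inl (Sum.inr 0)) (Sum.inl (Sum.inl 0)) = 1 ∧
        (∀ j : Fin n, S' (Sum.inr j) (Sum.inl (Sum.inl 0)) = 0)) ∧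
        S' (Sum.inl (Sum.inr 0)) (Sum.inl (Sum.inr 0)) = d} ≃
        {S' : Matrix ((Fin 1 ⊕ Fin 1) ⊕ Fin n) ((Fin 1 ⊕ Fin 1) ⊕ Fin n) F //
        (S'ᵀ = S' ∧ IsUnit S' ∧ S'.toBlocks₁₁ = Amat d) ∧
          (fun C : Matrix (Fin n) (Fin 1 ⊕ Fin 1) F => ∀ j, C j (Sum.inl 0) = 0)
            S'.toBlocks₂₁} := by
      refine Equiv.subtypeEquivRight (fun S => ?_)
      constructor
      · rintro ⟨⟨⟨h1, h2⟩, h3, h4, h5⟩, h6⟩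
        refine ⟨⟨h1, h2, ?_⟩, fun j => h5 j⟩
        ext i j
        cases i with
        | inl a =>
          have ha : a = 0 := Subsingleton.elim a 0
          subst ha
          cases j with
          | inl b =>
            have hb : b = 0 := Subsingleton.elim b 0
            subst hb
            exact h3
          | inr b =>
            have hb : b = 0 := Subsingleton.elim b 0
            subst hb
            have := congrFun (congrFun h1 (Sum.inl (Sum.inl 0))) (Sum.inl (Sum.inr 0))
            rw [Matrix.transpose_apply] at this
            exact this.symm.trans h4
        | inr a =>
          have ha : a = 0 := Subsingleton.elim a 0
          subst ha
          cases j with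
          | inl b =>
            have hb : b = 0 := Subsingleton.elim b 0
            subst hb
            exact h4
          | inr b =>
            have hb : b = 0 := Subsingleton.elim b 0
            subst hb
            exact h6
      · rintro ⟨⟨h1, h2, h3⟩, h5⟩
        have h00 := congrFun (congrFun h3 (Sum.inl 0)) (Sum.inl 0)
        have h10 := congrFun (congrFun h3 (Sum.inr 0)) (Sum.inl 0)
        have h11 := congrFun (congrFun h3 (Sum.inr 0)) (Sum.inr 0)
        exact ⟨⟨⟨h1, h2⟩, h00, h10, fun j => h5 j⟩, h11⟩
    rw [Nat.card_congr e2, count_fixed_block (Amat d) (Amat_symm d)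
      (fun C : Matrix (Fin n) (Fin 1 ⊕ Fin 1) F => ∀ j, C j (Sum.inl 0) = 0),
      card_colzero_matrix]
  rw [Finset.sum_congr rfl (fun d _ => hfib d), Finset.sum_const, Finset.card_univ, smul_eq_mul,
    ← mul_assoc, pow_succ, mul_comm (Fintype.card F ^ n) (Fintype.card F)]

lemma unit_no_zero_col {ι : Type} [Fintype ι] [DecidableEq ι] (S : Matrix ι ι F)
    (h : IsUnit S) (j : ι) (hcol : ∀ i, S i j = 0) : False := by
  have hd := (Matrix.isUnit_iff_isUnit_det S).mp h
  have h1 := Matrix.nonsing_inv_mul S hd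
  have h2 := congrFun (congrFun h1 j) j
  rw [Matrix.mul_apply] at h2
  simp only [hcol, mul_zero, Finset.sum_const_zero, Matrix.one_apply_eq] at h2
  exact zero_ne_one h2

lemma caseB (n : ℕ) :
    Nat.card {S : Matrix (Fin 1 ⊕ (Fin 1 ⊕ Fin n)) (Fin 1 ⊕ (Fin 1 ⊕ Fin n)) F //
        (Sᵀ = S ∧ IsUnit S) ∧ S (Sum.inl 0) (Sum.inl 0) = 0} =
      (Fintype.card F ^ (n + 1) - 1) * (Fintype.card F ^ (n + 1) * NSym (Fin n) F) := by
  rw [nat_card_fiber (fun S => colf S.1)]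
  have hflat : ∀ b : (Fin 1 ⊕ Fin n) → F,
      Nat.card {S : {S : Matrix (Fin 1 ⊕ (Fin 1 ⊕ Fin n)) (Fin 1 ⊕ (Fin 1 ⊕ Fin n)) F //
          (Sᵀ = S ∧ IsUnit S) ∧ S (Sum.inl 0) (Sum.inl 0) = 0} // colf S.1 = b} =
        Nat.card {S : Matrix (Fin 1 ⊕ (Fin 1 ⊕ Fin n)) (Fin 1 ⊕ (Fin 1 ⊕ Fin n)) F //
          (Sᵀ = S ∧ IsUnit S) ∧ S (Sum.inl 0) (Sum.inl 0) = 0 ∧ colf S = b} := by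
    intro b
    refine Nat.card_congr ((Equiv.subtypeSubtypeEquivSubtypeInter
      (fun S : Matrix (Fin 1 ⊕ (Fin 1 ⊕ Fin n)) (Fin 1 ⊕ (Fin 1 ⊕ Fin n)) F =>
        (Sᵀ = S ∧ IsUnit S) ∧ S (Sum.inl 0) (Sum.inl 0) = 0)
      (fun S => colf S = b)).trans
      (Equiv.subtypeEquivRight (fun S => ?_)))
    tauto
  have hzero : Nat.card {S : Matrix (Fin 1 ⊕ (Fin 1 ⊕ Fin n)) (Fin 1 ⊕ (Fin 1 ⊕ Fin n)) F //
      (Sᵀ = S ∧ IsUnit S) ∧ S (Sum.inl 0) (Sum.inl 0) = 0 ∧ colf S = 0} = 0 := by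
    rw [Nat.card_eq_zero]
    left
    refine ⟨fun S => ?_⟩
    obtain ⟨⟨h1, h2⟩, h3, h4⟩ := S.2
    refine unit_no_zero_col S.1 h2 (Sum.inl 0) (fun i => ?_)
    cases i with
    | inl a =>
      have : a = 0 := Subsingleton.elim a 0
      subst this
      exact h3
    | inr k => exact congrFun h4 k
  have hne : ∀ b : (Fin 1 ⊕ Fin n) → F, b ≠ 0 →
      Nat.card {S : Matrix (Fin 1 ⊕ (Fin 1 ⊕ Fin n)) (Fin 1 ⊕ (Fin 1 ⊕ Fin n)) F //
          (Sᵀ = S ∧ IsUnit S) ∧ S (Sum.inl 0) (Sum.inl 0) = 0 ∧ colf S = b} =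
        Fintype.card F ^ (n + 1) * NSym (Fin n) F := by
    intro b hb
    obtain ⟨g, hg, hgb⟩ := exists_invertible_mulVec (Sum.inl 0) b hb
    haveI : Invertible g := Classical.choice ((nonempty_invertible_iff_isUnit g).mpr hg)
    rw [← hgb, ← card_col_eq g (Pi.single (Sum.inl 0) 1)]
    exact caseB_single n
  rw [← Finset.add_sum_erase _ _ (Finset.mem_univ (0 : (Fin 1 ⊕ Fin n) → F))]
  rw [hflat 0, hzero, zero_add]
  rw [Finset.sum_congr rfl (fun b hb => (hflat b).trans
    (hne b (Finset.ne_of_mem_erase hb)))]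
  rw [Finset.sum_const, smul_eq_mul, Finset.card_erase_of_mem (Finset.mem_univ _),
    Finset.card_univ]
  congr 2
  rw [Fintype.card_fun, Fintype.card_sum, Fintype.card_fin, Fintype.card_fin, Nat.add_comm]

lemma recursion (n : ℕ) :
    NSym (Fin 1 ⊕ (Fin 1 ⊕ Fin n)) F =
      (Fintype.card F - 1) * (Fintype.card F ^ (n + 1) * NSym (Fin 1 ⊕ Fin n) F) +
        (Fintype.card F ^ (n + 1) - 1) * (Fintype.card F ^ (n + 1) * NSym (Fin n) F) := by
  rw [show NSym (Fin 1 ⊕ (Fin 1 ⊕ Fin n)) F =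
    Nat.card {S : Matrix (Fin 1 ⊕ (Fin 1 ⊕ Fin n)) (Fin 1 ⊕ (Fin 1 ⊕ Fin n)) F //
      Sᵀ = S ∧ IsUnit S} from rfl]
  rw [nat_card_fiber (fun S : {S : Matrix (Fin 1 ⊕ (Fin 1 ⊕ Fin n))
      (Fin 1 ⊕ (Fin 1 ⊕ Fin n)) F // Sᵀ = S ∧ IsUnit S} => S.1 (Sum.inl 0) (Sum.inl 0))]
  have hflat : ∀ c : F,
      Nat.card {S : {S : Matrix (Fin 1 ⊕ (Fin 1 ⊕ Fin n)) (Fin 1 ⊕ (Fin 1 ⊕ Fin n)) F //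
          Sᵀ = S ∧ IsUnit S} // S.1 (Sum.inl 0) (Sum.inl 0) = c} =
        Nat.card {S : Matrix (Fin 1 ⊕ (Fin 1 ⊕ Fin n)) (Fin 1 ⊕ (Fin 1 ⊕ Fin n)) F //
          (Sᵀ = S ∧ IsUnit S) ∧ S (Sum.inl 0) (Sum.inl 0) = c} := fun c =>
    Nat.card_congr (Equiv.subtypeSubtypeEquivSubtypeInter
      (fun S : Matrix (Fin 1 ⊕ (Fin 1 ⊕ Fin n)) (Fin 1 ⊕ (Fin 1 ⊕ Fin n)) F =>
        Sᵀ = S ∧ IsUnit S)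
      (fun S => S (Sum.inl 0) (Sum.inl 0) = c))
  rw [← Finset.add_sum_erase _ _ (Finset.mem_univ (0 : F))]
  rw [hflat 0, caseB n]
  have hcard : Fintype.card (Fin 1 ⊕ Fin n) = n + 1 := by
    rw [Fintype.card_sum, Fintype.card_fin, Fintype.card_fin, Nat.add_comm]
  rw [Finset.sum_congr rfl (fun c hc => (hflat c).trans (by
    rw [caseA c (Finset.ne_of_mem_erase hc), hcard]))]
  rw [Finset.sum_const, smul_eq_mul, Finset.card_erase_of_mem (Finset.mem_univ _),
    Finset.card_univ]
  ring

lemma NSym_zero : NSym (Fin 0) F = 1 := by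
  haveI : Unique {S : Matrix (Fin 0) (Fin 0) F // Sᵀ = S ∧ IsUnit S} := by
    refine ⟨⟨⟨1, Subsingleton.elim _ _, isUnit_one⟩⟩, fun S => Subtype.ext ?_⟩
    exact Subsingleton.elim _ _
  exact Nat.card_unique

lemma NSym_one : NSym (Fin 1) F = Fintype.card F - 1 := by
  have e : {S : Matrix (Fin 1) (Fin 1) F // Sᵀ = S ∧ IsUnit S} ≃ {x : F // x ≠ 0} := by
    refine ⟨fun S => ⟨S.1 0 0, ?_⟩, fun x => ⟨Matrix.of fun _ _ => x.1, ?_, ?_⟩, ?_, ?_⟩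
    · have := (Matrix.isUnit_iff_isUnit_det S.1).mp S.2.2
      rw [Matrix.det_fin_one] at this
      exact isUnit_iff_ne_zero.mp this
    · ext i j; rfl
    · rw [Matrix.isUnit_iff_isUnit_det, Matrix.det_fin_one]
      exact isUnit_iff_ne_zero.mpr x.2
    · intro S
      refine Subtype.ext ?_
      ext i j
      have hi : i = 0 := Subsingleton.elim i 0
      have hj : j = 0 := Subsingleton.elim j 0
      rw [hi, hj]
      rfl
    · intro x; rfl
  rw [NSym, Nat.card_congr e, Nat.card_eq_fintype_card]
  rw [Fintype.card_subtype_compl (p := fun x : F => x = 0), Fintype.card_subtype_eq (0 : F)]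

lemma NSym_fin (n : ℕ) :
    NSym (Fin n) F = ∏ i ∈ Finset.Icc 1 n,
      (if i % 2 = 1 then Fintype.card F ^ i - 1 else Fintype.card F ^ i) := by
  induction n using Nat.strong_induction_on with
  | _ n ih =>
    match n with
    | 0 => simpa using NSym_zero (F := F)
    | 1 =>
      rw [NSym_one]
      rw [show Finset.Icc 1 1 = {1} from rfl]
      simp
    | (n + 2) =>
      have e1 : Fin (n + 1) ≃ (Fin 1 ⊕ Fin n) :=
        (finCongr (by omega)).trans (finSumFinEquiv (m := 1) (n := n)).symm
      have e2 : Fin (n + 2) ≃ (Fin 1 ⊕ (Fin 1 ⊕ Fin n)) :=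
        (finCongr (by omega : n + 2 = 1 + (n + 1))).trans
          ((finSumFinEquiv (m := 1) (n := n + 1)).symm.trans
            (Equiv.sumCongr (Equiv.refl _) e1))
      rw [NSym_reindex e2, recursion n, ← NSym_reindex e1, ih (n + 1) (by omega),
        ih n (by omega)]
      have h2 : (2 : ℕ) ≤ Fintype.card F := Fintype.one_lt_card
      set q := Fintype.card F with hq
      rw [Finset.prod_Icc_succ_top (by omega : 1 ≤ n + 2),
        Finset.prod_Icc_succ_top (by omega : 1 ≤ n + 1)]
      set P := ∏ i ∈ Finset.Icc 1 n, (if i % 2 = 1 then q ^ i - 1 else q ^ i) with hP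
      have ha : 1 ≤ q ^ (n + 1) := Nat.one_le_pow _ _ (by omega)
      have hq1 : 1 ≤ q := by omega
      have hqa : q ^ (n + 2) = q ^ (n + 1) * q := by ring
      rcases Nat.even_or_odd n with he | ho
      · obtain ⟨k, rfl⟩ := he
        have h1 : (k + k + 1) % 2 = 1 := by omega
        have h0 : (k + k + 2) % 2 ≠ 1 := by omega
        rw [if_pos h1, if_neg h0]
        zify [ha, hq1]
        ring
      · obtain ⟨k, rfl⟩ := ho
        have h1 : (2 * k + 1 + 1) % 2 ≠ 1 := by omega
        have h0 : (2 * k + 1 + 2) % 2 = 1 := by omega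
        have hqa1 : 1 ≤ q ^ (2 * k + 1 + 2) := Nat.one_le_pow _ _ (by omega)
        rw [if_neg h1, if_pos h0]
        zify [ha, hq1, hqa1]
        ring

noncomputable def glEquiv (n : ℕ) : {g : GL (Fin n) F // g * tau g = 1} ≃
    {S : Matrix (Fin n) (Fin n) F // Sᵀ = S ∧ IsUnit S} where
  toFun g := ⟨(g.1 : Matrix (Fin n) (Fin n) F), by
    have h : (g.1 : Matrix (Fin n) (Fin n) F) * ((g.1⁻¹ : GL (Fin n) F) :
        Matrix (Fin n) (Fin n) F)ᵀ = 1 := by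
      have := congrArg Units.val g.2
      rwa [Units.val_mul, Units.val_one] at this
    have ht : ((g.1⁻¹ : GL (Fin n) F) : Matrix (Fin n) (Fin n) F) *
        ((g.1 : Matrix (Fin n) (Fin n) F))ᵀ = 1 := by
      have := congrArg Matrix.transpose h
      rwa [Matrix.transpose_mul, Matrix.transpose_transpose, Matrix.transpose_one] at this
    refine ⟨?_, g.1.isUnit⟩
    calc ((g.1 : Matrix (Fin n) (Fin n) F))ᵀ
        = ((g.1 : Matrix (Fin n) (Fin n) F) * ((g.1⁻¹ : GL (Fin n) F) :
            Matrix (Fin n) (Fin n) F)) * ((g.1 : Matrix (Fin n) (Fin n) F))ᵀ := by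
          rw [Units.mul_inv, Matrix.one_mul]
      _ = (g.1 : Matrix (Fin n) (Fin n) F) * (((g.1⁻¹ : GL (Fin n) F) :
            Matrix (Fin n) (Fin n) F) * ((g.1 : Matrix (Fin n) (Fin n) F))ᵀ) := by
          rw [Matrix.mul_assoc]
      _ = (g.1 : Matrix (Fin n) (Fin n) F) := by rw [ht, Matrix.mul_one]⟩
  invFun S := ⟨S.2.2.unit, by
    apply Units.ext
    show (S.2.2.unit : Matrix (Fin n) (Fin n) F) *
      ((S.2.2.unit⁻¹ : GL (Fin n) F) : Matrix (Fin n) (Fin n) F)ᵀ = 1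
    have h1 : ((S.2.2.unit⁻¹ : GL (Fin n) F) : Matrix (Fin n) (Fin n) F) *
        (S.2.2.unit : Matrix (Fin n) (Fin n) F) = 1 := Units.inv_mul _
    have h2 := congrArg Matrix.transpose h1
    rw [Matrix.transpose_mul, Matrix.transpose_one] at h2
    rw [IsUnit.unit_spec] at h2 ⊢
    exact (congrArg
      (fun M => M * ((S.2.2.unit⁻¹ : GL (Fin n) F) : Matrix (Fin n) (Fin n) F)ᵀ)
      S.2.1).symm.trans h2⟩
  left_inv g := by
    apply Subtype.ext
    apply Units.ext
    exact IsUnit.unit_spec g.1.isUnit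
  right_inv S := by
    apply Subtype.ext
    exact IsUnit.unit_spec S.2.2

theorem stmt3 (q n : ℕ) (hq : IsPrimePow q) (hn : 1 ≤ n)
    (F : Type) [Field F] [Fintype F] (hF : Fintype.card F = q) :
    Nat.card {g : GL (Fin n) F // g * tau g = 1} =
      ∏ i ∈ Finset.Icc 1 n, (if i % 2 = 1 then q ^ i - 1 else q ^ i) := by
  subst hF
  exact (Nat.card_congr (glEquiv n)).trans (NSym_fin n)
end

section
/- Let q be a real number with q ≥ 2 and let λ be a partition in which every even part occurs with even multiplicity. Then q^{n(λ) + (|λ| - o(λ))/2} · ∏_{i≥1} ∏_{j=1}^{⌊m_i(λ)/2⌋} (1 - q^{-2j}) ≥ q^{⌊|λ|/2⌋} · (1 - 1/q² - 1/q⁴). (Note |λ| - o(λ) is even, so the exponent is an integer.) -/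
/-- The partition statistic `n(μ) = ∑_i (i-1) μ_i` (parts in decreasing order). -/
def partN (μ : Multiset ℕ) : ℕ :=
  (((μ.sort (· ≤ ·)).reverse).zipIdx.map (fun p => p.2 * p.1)).sum

/-- The number of odd parts of a partition, counted with multiplicity. -/
def partO (μ : Multiset ℕ) : ℕ := Multiset.card (μ.filter (fun i => i % 2 = 1))

lemma partO_mod (s : Multiset ℕ) : s.sum % 2 = partO s % 2 := by
  induction s using Multiset.induction with
  | empty => simp [partO]
  | cons a s ih =>
    simp only [partO, Multiset.filter_cons, Multiset.sum_cons, Multiset.card_add] at *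
    by_cases h : a % 2 = 1 <;> simp [h] <;> omega

lemma listRangeSum (k : ℕ) : (List.range k).sum * 2 = k * (k - 1) := by
  induction k with
  | zero => rfl
  | succ n ih =>
    rw [List.range_succ, List.sum_append, Nat.add_mul, ih]
    cases n with
    | zero => rfl
    | succ m =>
      simp only [List.sum_cons, List.sum_nil, Nat.succ_sub_one, Nat.add_zero]
      ring

lemma partN_ge (μ : Multiset ℕ) (h : ∀ a ∈ μ, 1 ≤ a) :
    (List.range (Multiset.card μ)).sum ≤ partN μ := by
  unfold partN
  set l := (μ.sort (· ≤ ·)).reverse with hl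
  have hlen : l.length = Multiset.card μ := by simp [hl]
  have h1 : (l.zipIdx.map Prod.snd).sum ≤ (l.zipIdx.map (fun p => p.2 * p.1)).sum := by
    apply List.sum_le_sum
    intro p hp
    have h2 : p.1 ∈ l := List.fst_mem_of_mem_zipIdx hp
    have h3 : 1 ≤ p.1 := by
      apply h
      rw [hl] at h2
      simpa using h2
    calc p.2 = p.2 * 1 := (mul_one _).symm
    _ ≤ p.2 * p.1 := Nat.mul_le_mul_left _ h3
  rwa [List.zipIdx_map_snd, ← List.range_eq_range', hlen] at h1

set_option maxHeartbeats 1000000 in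
theorem stmt12 (q : ℝ) (hq : 2 ≤ q) (N : ℕ) (lam : Nat.Partition N)
    (hlam : ∀ i, i % 2 = 0 → lam.parts.count i % 2 = 0) :
    q ^ (partN lam.parts + (N - partO lam.parts) / 2) *
      ∏ i ∈ Finset.Icc 1 N, ∏ j ∈ Finset.Icc 1 (lam.parts.count i / 2),
        (1 - q⁻¹ ^ (2 * j)) ≥
    q ^ (N / 2) * (1 - 1 / q ^ 2 - 1 / q ^ 4) := by
  classical
  set k := Multiset.card lam.parts with hk
  set T := ∑ i ∈ Finset.Icc 1 N, lam.parts.count i / 2 with hT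
  set o := partO lam.parts with ho
  set E := partN lam.parts + (N - o) / 2 with hE
  have hq0 : (0:ℝ) < q := lt_of_lt_of_le (by norm_num) hq
  have hq1 : (1:ℝ) ≤ q := le_trans (by norm_num) hq
  have hx0 : (0:ℝ) ≤ q⁻¹ := by positivity
  have hx1 : q⁻¹ ≤ 2⁻¹ := by
    rw [inv_le_inv₀ hq0 (by norm_num)]; exact hq
  have hx1' : q⁻¹ ≤ 1 := le_trans hx1 (by norm_num)
  -- arithmetic facts
  have hpos : ∀ a ∈ lam.parts, 1 ≤ a := fun a ha => lam.parts_pos ha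
  have hsum : lam.parts.sum = N := lam.parts_sum
  have hsub : lam.parts.toFinset ⊆ Finset.Icc 1 N := by
    intro i hi
    rw [Multiset.mem_toFinset] at hi
    rw [Finset.mem_Icc]
    exact ⟨hpos i hi, by
      calc i ≤ lam.parts.sum := Multiset.single_le_sum (fun x _ => Nat.zero_le x) _ hi
      _ = N := hsum⟩
  have hcount : ∑ i ∈ Finset.Icc 1 N, lam.parts.count i = k := by
    rw [hk, ← Multiset.toFinset_sum_count_eq lam.parts]
    exact (Finset.sum_subset hsub (fun i _ hi => by
      rwa [Multiset.count_eq_zero, ← Multiset.mem_toFinset])).symm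
  have hTk : 2 * T ≤ k := by
    rw [hT, ← hcount, Finset.mul_sum]
    exact Finset.sum_le_sum (fun i _ => by omega)
  have hkN : k ≤ N := by
    have h2 := Multiset.card_nsmul_le_sum (a := 1) (s := lam.parts) hpos
    rw [hsum, smul_eq_mul, mul_one] at h2
    exact h2
  have hok : o ≤ k := Multiset.card_le_card (Multiset.filter_le _ _)
  have homod : N % 2 = o % 2 := by rw [← hsum]; exact partO_mod _
  set S := (List.range k).sum with hSdef
  have hS : S ≤ partN lam.parts := partN_ge _ hpos
  have hgauss : S * 2 = k * (k - 1) := listRangeSum k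
  -- exponent bounds
  have hE1 : N / 2 ≤ E := by
    rcases Nat.eq_zero_or_pos k with h0 | h0
    · have : lam.parts = 0 := by
        rwa [← Multiset.card_eq_zero]
      have hN0 : N = 0 := by rw [← hsum, this]; rfl
      simp [hE, hN0]
    · have h1 : k - 1 ≤ k * (k - 1) := Nat.le_mul_of_pos_left _ h0
      omega
  have hE2 : 2 ≤ T → N / 2 + T ≤ E := by
    intro h2
    have hk4 : 4 ≤ k := by omega
    have h3 : k * 3 ≤ k * (k - 1) := Nat.mul_le_mul_left k (by omega)
    omega
  -- product bound
  have hfac : ∀ j : ℕ, 1 ≤ j → 1 - q⁻¹ ^ 2 ≤ 1 - q⁻¹ ^ (2 * j) := by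
    intro j hj
    have := pow_le_pow_of_le_one hx0 hx1' (le_refl (2*j))
    have h : q⁻¹ ^ (2 * j) ≤ q⁻¹ ^ 2 :=
      pow_le_pow_of_le_one hx0 hx1' (by omega)
    linarith
  have hy0 : (0:ℝ) ≤ 1 - q⁻¹ ^ 2 := by nlinarith
  have hP1 : (1 - q⁻¹ ^ 2) ^ T ≤
      ∏ i ∈ Finset.Icc 1 N, ∏ j ∈ Finset.Icc 1 (lam.parts.count i / 2),
        (1 - q⁻¹ ^ (2 * j)) := by
    rw [hT, ← Finset.prod_pow_eq_pow_sum]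
    apply Finset.prod_le_prod (fun i _ => pow_nonneg hy0 _)
    intro i _
    have : (1 - q⁻¹ ^ 2) ^ (lam.parts.count i / 2) =
        ∏ j ∈ Finset.Icc 1 (lam.parts.count i / 2), (1 - q⁻¹ ^ 2) := by
      rw [Finset.prod_const, Nat.card_Icc]; norm_num
    rw [this]
    apply Finset.prod_le_prod (fun j _ => hy0)
    intro j hj
    exact hfac j (Finset.mem_Icc.mp hj).1
  have hP0 : (0:ℝ) ≤ (1 - q⁻¹ ^ 2) ^ T := pow_nonneg hy0 _
  have hc : 1 - 1 / q ^ 2 - 1 / q ^ 4 = 1 - q⁻¹ ^ 2 - q⁻¹ ^ 4 := by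
    field_simp
  rw [ge_iff_le, hc]
  have key : q ^ (N/2) * (1 - q⁻¹ ^ 2 - q⁻¹ ^ 4) ≤ q ^ E * (1 - q⁻¹ ^ 2) ^ T := by
    rcases le_or_gt T 1 with hT1 | hT2
    · have h1 : 1 - q⁻¹ ^ 2 - q⁻¹ ^ 4 ≤ (1 - q⁻¹ ^ 2) ^ T := by
        interval_cases T
        · rw [pow_zero]
          have h4 : (0:ℝ) ≤ q⁻¹ ^ 2 := by positivity
          have h5 : (0:ℝ) ≤ q⁻¹ ^ 4 := by positivity
          linarith
        · rw [pow_one]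
          have h5 : (0:ℝ) ≤ q⁻¹ ^ 4 := by positivity
          linarith
      calc q ^ (N/2) * (1 - q⁻¹ ^ 2 - q⁻¹ ^ 4) ≤ q ^ E * (1 - q⁻¹ ^ 2 - q⁻¹ ^ 4) := by
            apply mul_le_mul_of_nonneg_right (pow_le_pow_right₀ hq1 hE1)
            have h4 : (0:ℝ) ≤ q⁻¹ ^ 2 := by positivity
            have h5 : (0:ℝ) ≤ q⁻¹ ^ 4 := by positivity
            nlinarith [sq_nonneg (q⁻¹ ^ 2 + q⁻¹ ^ 4)]
        _ ≤ q ^ E * (1 - q⁻¹ ^ 2) ^ T := by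
            apply mul_le_mul_of_nonneg_left h1 (by positivity)
    · have hE2' := hE2 (by omega)
      have h2 : (1:ℝ) ≤ (q * (1 - q⁻¹ ^ 2)) ^ T := by
        apply one_le_pow₀
        have : q * (1 - q⁻¹ ^ 2) = q - q⁻¹ := by
          field_simp
        rw [this]
        linarith
      calc q ^ (N/2) * (1 - q⁻¹ ^ 2 - q⁻¹ ^ 4) ≤ q ^ (N/2) * 1 := by
            apply mul_le_mul_of_nonneg_left
              (by
                have h4 : (0:ℝ) ≤ q⁻¹ ^ 2 := by positivity
                have h5 : (0:ℝ) ≤ q⁻¹ ^ 4 := by positivity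
                linarith) (by positivity)
        _ ≤ q ^ (N/2) * (q * (1 - q⁻¹ ^ 2)) ^ T := by
            apply mul_le_mul_of_nonneg_left h2 (by positivity)
        _ = q ^ (N/2 + T) * (1 - q⁻¹ ^ 2) ^ T := by
            rw [mul_pow, pow_add]; ring
        _ ≤ q ^ E * (1 - q⁻¹ ^ 2) ^ T := by
            apply mul_le_mul_of_nonneg_right (pow_le_pow_right₀ hq1 hE2') hP0
  calc q ^ (N/2) * (1 - q⁻¹ ^ 2 - q⁻¹ ^ 4) ≤ q ^ E * (1 - q⁻¹ ^ 2) ^ T := key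
    _ ≤ q ^ E * _ := mul_le_mul_of_nonneg_left hP1 (by positivity)
end

section
/- Let q be a real number with q ≥ 2 and let λ be a partition in which every odd part occurs with even multiplicity. Then q^{n(λ) + (|λ| + o(λ))/2} · ∏_{i≥1} ∏_{j=1}^{⌊m_i(λ)/2⌋} (1 - q^{-2j}) ≥ q^{|λ|/2} · (1 - 1/q² - 1/q⁴). (Note |λ| and o(λ) are both even, so the exponents are integers.) -/
lemma aux2 (t : ℝ) (ht0 : 0 ≤ t) (ht : t ≤ 1/2) :
    ∀ M : ℕ, 1 ≤ M →
      1 - t - t^2 + t^(M+1) ≤ (1-t) * ∏ j ∈ Finset.Icc 2 M, (1 - t^j) := by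
  intro M
  induction M with
  | zero => omega
  | succ M ih =>
    intro _
    rcases Nat.eq_zero_or_pos M with h0 | hM
    · subst h0
      simp only [show Finset.Icc 2 1 = ∅ from rfl, Finset.prod_empty, mul_one]
      have h2 : t^(0+1+1) = t^2 := by norm_num
      linarith
    · have ih' := ih hM
      have hins : Finset.Icc 2 (M+1) = insert (M+1) (Finset.Icc 2 M) := by
        ext k; simp only [Finset.mem_Icc, Finset.mem_insert]; omega
      have hnm : (M+1) ∉ Finset.Icc 2 M := by simp
      rw [hins, Finset.prod_insert hnm]
      have ha : t^(M+1) ≤ t^2 := pow_le_pow_of_le_one ht0 (by linarith) (by omega)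
      have ha0 : 0 ≤ t^(M+1) := pow_nonneg ht0 _
      have hfac : 0 ≤ 1 - t^(M+1) := by nlinarith
      have hstep : (1 - t^(M+1)) * (1 - t - t^2 + t^(M+1)) ≤
          (1 - t^(M+1)) * ((1-t) * ∏ j ∈ Finset.Icc 2 M, (1 - t^j)) :=
        mul_le_mul_of_nonneg_left ih' hfac
      have hpow : t^(M+1+1) = t^(M+1) * t := by ring
      nlinarith [hstep, mul_nonneg ha0 (sub_nonneg.mpr ha)]

lemma aux1 (t : ℝ) (ht0 : 0 ≤ t) (ht : t ≤ 1/2) (M : ℕ) :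
    1 - t - t^2 ≤ ∏ j ∈ Finset.Icc 1 M, (1 - t^j) := by
  rcases Nat.eq_zero_or_pos M with h0 | hM
  · subst h0; simp; nlinarith [sq_nonneg t]
  · have hins : Finset.Icc 1 M = insert 1 (Finset.Icc 2 M) := by
      ext k; simp only [Finset.mem_Icc, Finset.mem_insert]; omega
    have hnm : (1:ℕ) ∉ Finset.Icc 2 M := by simp
    rw [hins, Finset.prod_insert hnm]
    have := aux2 t ht0 ht M hM
    have ha0 : 0 ≤ t^(M+1) := pow_nonneg ht0 _
    simpa only [pow_one] using le_trans (by nlinarith) this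

lemma aux3 (t : ℝ) (ht0 : 0 ≤ t) (ht : t ≤ 1/2) (M : ℕ) :
    t ^ M ≤ ∏ j ∈ Finset.Icc 1 M, (1 - t^j) := by
  have : ∏ j ∈ Finset.Icc 1 M, t ≤ ∏ j ∈ Finset.Icc 1 M, (1 - t^j) := by
    apply Finset.prod_le_prod (fun i _ => ht0) (fun i hi => ?_)
    have hi1 : 1 ≤ i := (Finset.mem_Icc.mp hi).1
    have : t ^ i ≤ t := pow_le_of_le_one ht0 (by linarith) (by omega)
    linarith
  simpa [Finset.prod_const, Nat.card_Icc] using this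

lemma partN_card (μ : Multiset ℕ) (hpos : ∀ x ∈ μ, 0 < x) :
    Multiset.card μ ≤ partN μ + 1 := by
  classical
  set l := (μ.sort (· ≤ ·)).reverse with hl
  have hlen : l.length = Multiset.card μ := by
    simp [hl, Multiset.length_sort]
  have h1 : (l.zipIdx.map Prod.snd).sum ≤ (l.zipIdx.map (fun p => p.2 * p.1)).sum := by
    apply List.sum_le_sum
    intro p hp
    have hp2 : p.1 ∈ l := List.fst_mem_of_mem_zipIdx hp
    have : p.1 ∈ μ := by
      rw [hl, List.mem_reverse] at hp2
      exact (Multiset.mem_sort _).mp hp2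
    have := hpos _ this
    exact Nat.le_mul_of_pos_right _ this
  rw [List.zipIdx_map_snd, ← List.range_eq_range'] at h1
  rcases Nat.eq_zero_or_pos l.length with h0 | hpos'
  · omega
  · have hmem : l.length - 1 ∈ List.range l.length := by
      rw [List.mem_range]; omega
    have h2 : l.length - 1 ≤ (List.range l.length).sum :=
      List.single_le_sum (fun x _ => Nat.zero_le x) _ hmem
    have : partN μ = (l.zipIdx.map (fun p => p.2 * p.1)).sum := rfl
    omega

theorem stmt13 (q : ℝ) (hq : 2 ≤ q) (N : ℕ) (lam : Nat.Partition N)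
    (hlam : ∀ i, i % 2 = 1 → lam.parts.count i % 2 = 0) :
    q ^ (partN lam.parts + (N + partO lam.parts) / 2) *
      ∏ i ∈ Finset.Icc 1 N, ∏ j ∈ Finset.Icc 1 (lam.parts.count i / 2),
        (1 - q⁻¹ ^ (2 * j)) ≥
    q ^ (N / 2) * (1 - 1 / q ^ 2 - 1 / q ^ 4) := by
  classical
  have hq0 : (0:ℝ) < q := by linarith
  have hq1 : (1:ℝ) ≤ q := by linarith
  set x : ℝ := q⁻¹ ^ 2 with hxdef
  have hx0 : 0 ≤ x := by positivity
  have hxinv : q⁻¹ ≤ 1/2 := by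
    rw [inv_le_comm₀ (by linarith) (by norm_num)]; linarith
  have hx : x ≤ 1/2 := by
    have : q⁻¹ ^ 2 ≤ (1/2:ℝ)^2 := by
      apply pow_le_pow_left₀ (by positivity) hxinv
    rw [hxdef]; nlinarith
  -- rewrite constants
  have hxq : 1 / q ^ 2 = x := by
    rw [hxdef, one_div, inv_pow]
  have hxq2 : 1 / q ^ 4 = x ^ 2 := by
    rw [hxdef, one_div, ← pow_mul, inv_pow]
  -- rewrite the inner factors
  have hpm : ∀ j : ℕ, q⁻¹ ^ (2 * j) = x ^ j := fun j => by
    rw [hxdef, ← pow_mul]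
  simp only [hpm, hxq, hxq2, ge_iff_le]
  -- core inequality
  set c : ℕ → ℕ := fun i => lam.parts.count i / 2 with hc
  set P : ℝ := ∏ i ∈ Finset.Icc 1 N, ∏ j ∈ Finset.Icc 1 (c i), (1 - x ^ j) with hP
  have hcore : 1 - x - x^2 ≤ q ^ partN lam.parts * P := by
    by_cases hex : ∃ i ∈ Finset.Icc 1 N, 2 ≤ lam.parts.count i
    · obtain ⟨i₀, hi₀mem, hi₀⟩ := hex
      -- split the product
      have hsplit : P = (∏ j ∈ Finset.Icc 1 (c i₀), (1 - x ^ j)) *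
          ∏ i ∈ (Finset.Icc 1 N).erase i₀, ∏ j ∈ Finset.Icc 1 (c i), (1 - x ^ j) :=
        (Finset.mul_prod_erase _ _ hi₀mem).symm
      set S : ℕ := ∑ i ∈ (Finset.Icc 1 N).erase i₀, c i with hS
      have hQ : x ^ S ≤ ∏ i ∈ (Finset.Icc 1 N).erase i₀,
          ∏ j ∈ Finset.Icc 1 (c i), (1 - x ^ j) := by
        calc x ^ S = ∏ i ∈ (Finset.Icc 1 N).erase i₀, x ^ (c i) := by
              rw [hS, ← Finset.prod_pow_eq_pow_sum]
          _ ≤ _ := Finset.prod_le_prod (fun i _ => by positivity)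
              (fun i _ => aux3 x hx0 hx (c i))
      have hI : 1 - x - x^2 ≤ ∏ j ∈ Finset.Icc 1 (c i₀), (1 - x ^ j) :=
        aux1 x hx0 hx (c i₀)
      have hIpos : (0:ℝ) ≤ 1 - x - x^2 := by nlinarith
      -- the nat inequality : 2 * S ≤ partN
      have hnat : 2 * S ≤ partN lam.parts := by
        have h2c : 2 * S ≤ ∑ i ∈ (Finset.Icc 1 N).erase i₀, lam.parts.count i := by
          rw [Finset.mul_sum]
          exact Finset.sum_le_sum (fun i _ => Nat.mul_div_le _ 2)
        have hsum : ∑ i ∈ Finset.Icc 1 N, lam.parts.count i = Multiset.card lam.parts := by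
          have hsub : lam.parts.toFinset ⊆ Finset.Icc 1 N := by
            intro i hi
            rw [Multiset.mem_toFinset] at hi
            rw [Finset.mem_Icc]
            refine ⟨lam.parts_pos hi, ?_⟩
            calc i ≤ lam.parts.sum := Multiset.single_le_sum (fun y _ => Nat.zero_le y) _ hi
              _ = N := lam.parts_sum
          rw [← Finset.sum_subset hsub (fun i _ hni => by
            rwa [Multiset.count_eq_zero, ← Multiset.mem_toFinset])]
          exact Multiset.toFinset_sum_count_eq _
        have hins : lam.parts.count i₀ + ∑ i ∈ (Finset.Icc 1 N).erase i₀, lam.parts.count i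
            = ∑ i ∈ Finset.Icc 1 N, lam.parts.count i :=
          Finset.add_sum_erase _ (fun i => lam.parts.count i) hi₀mem
        have hcard := partN_card lam.parts (fun y hy => lam.parts_pos hy)
        omega
      have hpow : 1 ≤ q ^ partN lam.parts * x ^ S := by
        have hxS : x ^ S = (q ^ (2*S))⁻¹ := by
          rw [hxdef, ← pow_mul, inv_pow, mul_comm]
        rw [hxS, ← div_eq_mul_inv, le_div_iff₀ (by positivity), one_mul]
        exact pow_le_pow_right₀ hq1 hnat
      calc 1 - x - x^2 = 1 * (1 - x - x^2) := (one_mul _).symm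
        _ ≤ (q ^ partN lam.parts * x ^ S) * (1 - x - x^2) :=
            mul_le_mul_of_nonneg_right hpow hIpos
        _ = q ^ partN lam.parts * ((1 - x - x^2) * x ^ S) := by ring
        _ ≤ q ^ partN lam.parts * ((∏ j ∈ Finset.Icc 1 (c i₀), (1 - x ^ j)) *
              ∏ i ∈ (Finset.Icc 1 N).erase i₀, ∏ j ∈ Finset.Icc 1 (c i), (1 - x ^ j)) := by
            apply mul_le_mul_of_nonneg_left _ (by positivity)
            exact mul_le_mul hI hQ (by positivity) (le_trans hIpos hI)
        _ = q ^ partN lam.parts * P := by rw [hsplit]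
    · push_neg at hex
      have hP1 : P = 1 := by
        rw [hP]
        apply Finset.prod_eq_one
        intro i hi
        have : c i = 0 := by
          have h := hex i hi
          show lam.parts.count i / 2 = 0
          omega
        rw [this]
        simp
      rw [hP1, mul_one]
      have : (1:ℝ) ≤ q ^ partN lam.parts := one_le_pow₀ hq1
      nlinarith
  -- combine with the exponent part
  have hdiv : N / 2 ≤ (N + partO lam.parts) / 2 :=
    Nat.div_le_div_right (Nat.le_add_right _ _)
  have h2 : q ^ (N/2) ≤ q ^ ((N + partO lam.parts)/2) := pow_le_pow_right₀ hq1 hdiv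
  have hIpos : (0:ℝ) ≤ 1 - x - x^2 := by nlinarith
  calc q ^ (N/2) * (1 - x - x^2)
      ≤ q ^ ((N + partO lam.parts)/2) * (q ^ partN lam.parts * P) :=
        mul_le_mul h2 hcore hIpos (by positivity)
    _ = q ^ (partN lam.parts + (N + partO lam.parts)/2) * P := by
        rw [pow_add]; ring
end

section
/- Let q be a real number with q ≥ √2. Then 1 - 1/q - 1/q² + 1/q⁵ + 1/q⁷ - 1/q¹² - 1/q¹⁵ < ∏_{i=1}^{∞} (1 - 1/q^i) < 1 - 1/q, where the middle expression is the convergent infinite product over all integers i ≥ 1. -/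
open Filter Finset Topology

set_option maxHeartbeats 2000000

lemma aux_Gpos (x : ℝ) (h0 : 0 ≤ x) (hr : x ≤ 442/625) :
    0 < 1 - x - x ^ 3 + 2 * x ^ 4 - x ^ 5 + x ^ 6 - x ^ 10 - x ^ 12 - x ^ 13 - x ^ 16 + 2 * x ^ 17 - x ^ 18 + 3 * x ^ 19 + x ^ 20 + x ^ 21 + x ^ 23 - x ^ 24 - x ^ 25 - x ^ 26 - 2 * x ^ 27 - x ^ 28 - x ^ 29 - x ^ 31 + x ^ 32 + x ^ 33 + 2 * x ^ 34 + x ^ 35 + x ^ 36 + x ^ 38 - x ^ 39 - 2 * x ^ 41 - 2 * x ^ 44 + x ^ 45 + x ^ 49 + x ^ 51 - x ^ 54 - x ^ 55 + x ^ 56 := by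
  rcases le_total x (3/5 : ℝ) with hI0 | hI0
  · -- x ∈ [0,3/5]
    have HU : ∀ k : ℕ, x ^ k ≤ (3/5 : ℝ) ^ k := fun k => pow_le_pow_left₀ h0 hI0 k
    have hneg : x + x ^ 3 + x ^ 5 + x ^ 10 + x ^ 12 + x ^ 13 + x ^ 16 + x ^ 18 + x ^ 24 + x ^ 25 + x ^ 26 + 2 * x ^ 27 + x ^ 28 + x ^ 29 + x ^ 31 + x ^ 39 + 2 * x ^ 41 + 2 * x ^ 44 + x ^ 54 + x ^ 55 ≤ (214201737031/237031000000 : ℝ) := by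
      have h1 : x + x ^ 3 + x ^ 5 + x ^ 10 + x ^ 12 + x ^ 13 + x ^ 16 + x ^ 18 + x ^ 24 + x ^ 25 + x ^ 26 + 2 * x ^ 27 + x ^ 28 + x ^ 29 + x ^ 31 + x ^ 39 + 2 * x ^ 41 + 2 * x ^ 44 + x ^ 54 + x ^ 55 ≤ (3/5 : ℝ) + (3/5 : ℝ) ^ 3 + (3/5 : ℝ) ^ 5 + (3/5 : ℝ) ^ 10 + (3/5 : ℝ) ^ 12 + (3/5 : ℝ) ^ 13 + (3/5 : ℝ) ^ 16 + (3/5 : ℝ) ^ 18 + (3/5 : ℝ) ^ 24 + (3/5 : ℝ) ^ 25 + (3/5 : ℝ) ^ 26 + 2 * (3/5 : ℝ) ^ 27 + (3/5 : ℝ) ^ 28 + (3/5 : ℝ) ^ 29 + (3/5 : ℝ) ^ 31 + (3/5 : ℝ) ^ 39 + 2 * (3/5 : ℝ) ^ 41 + 2 * (3/5 : ℝ) ^ 44 + (3/5 : ℝ) ^ 54 + (3/5 : ℝ) ^ 55 := by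
        linarith [HU 1, HU 3, HU 5, HU 10, HU 12, HU 13, HU 16, HU 18, HU 24, HU 25, HU 26, HU 27, HU 28, HU 29, HU 31, HU 39, HU 41, HU 44, HU 54, HU 55, HU 1]
      have h2 : (3/5 : ℝ) + (3/5 : ℝ) ^ 3 + (3/5 : ℝ) ^ 5 + (3/5 : ℝ) ^ 10 + (3/5 : ℝ) ^ 12 + (3/5 : ℝ) ^ 13 + (3/5 : ℝ) ^ 16 + (3/5 : ℝ) ^ 18 + (3/5 : ℝ) ^ 24 + (3/5 : ℝ) ^ 25 + (3/5 : ℝ) ^ 26 + 2 * (3/5 : ℝ) ^ 27 + (3/5 : ℝ) ^ 28 + (3/5 : ℝ) ^ 29 + (3/5 : ℝ) ^ 31 + (3/5 : ℝ) ^ 39 + 2 * (3/5 : ℝ) ^ 41 + 2 * (3/5 : ℝ) ^ 44 + (3/5 : ℝ) ^ 54 + (3/5 : ℝ) ^ 55 ≤ (214201737031/237031000000 : ℝ) := by norm_num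
      linarith
    have hpos : (1:ℝ) ≤ 1 + 2 * x ^ 4 + x ^ 6 + 2 * x ^ 17 + 3 * x ^ 19 + x ^ 20 + x ^ 21 + x ^ 23 + x ^ 32 + x ^ 33 + 2 * x ^ 34 + x ^ 35 + x ^ 36 + x ^ 38 + x ^ 45 + x ^ 49 + x ^ 51 + x ^ 56 := by
      have h3 : (0:ℝ) ≤ 2 * x ^ 4 + x ^ 6 + 2 * x ^ 17 + 3 * x ^ 19 + x ^ 20 + x ^ 21 + x ^ 23 + x ^ 32 + x ^ 33 + 2 * x ^ 34 + x ^ 35 + x ^ 36 + x ^ 38 + x ^ 45 + x ^ 49 + x ^ 51 + x ^ 56 := by positivity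
      linarith
    linarith
  rcases le_total x (33/50 : ℝ) with hI1 | hI1
  · -- x ∈ [3/5,33/50]
    have HU : ∀ k : ℕ, x ^ k ≤ (33/50 : ℝ) ^ k := fun k => pow_le_pow_left₀ h0 hI1 k
    have hneg : x + x ^ 3 + x ^ 5 + x ^ 10 + x ^ 12 + x ^ 13 + x ^ 16 + x ^ 18 + x ^ 24 + x ^ 25 + x ^ 26 + 2 * x ^ 27 + x ^ 28 + x ^ 29 + x ^ 31 + x ^ 39 + 2 * x ^ 41 + 2 * x ^ 44 + x ^ 54 + x ^ 55 ≤ (1023623929083/929083000000 : ℝ) := by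
      have h1 : x + x ^ 3 + x ^ 5 + x ^ 10 + x ^ 12 + x ^ 13 + x ^ 16 + x ^ 18 + x ^ 24 + x ^ 25 + x ^ 26 + 2 * x ^ 27 + x ^ 28 + x ^ 29 + x ^ 31 + x ^ 39 + 2 * x ^ 41 + 2 * x ^ 44 + x ^ 54 + x ^ 55 ≤ (33/50 : ℝ) + (33/50 : ℝ) ^ 3 + (33/50 : ℝ) ^ 5 + (33/50 : ℝ) ^ 10 + (33/50 : ℝ) ^ 12 + (33/50 : ℝ) ^ 13 + (33/50 : ℝ) ^ 16 + (33/50 : ℝ) ^ 18 + (33/50 : ℝ) ^ 24 + (33/50 : ℝ) ^ 25 + (33/50 : ℝ) ^ 26 + 2 * (33/50 : ℝ) ^ 27 + (33/50 : ℝ) ^ 28 + (33/50 : ℝ) ^ 29 + (33/50 : ℝ) ^ 31 + (33/50 : ℝ) ^ 39 + 2 * (33/50 : ℝ) ^ 41 + 2 * (33/50 : ℝ) ^ 44 + (33/50 : ℝ) ^ 54 + (33/50 : ℝ) ^ 55 := by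
        linarith [HU 1, HU 3, HU 5, HU 10, HU 12, HU 13, HU 16, HU 18, HU 24, HU 25, HU 26, HU 27, HU 28, HU 29, HU 31, HU 39, HU 41, HU 44, HU 54, HU 55, HU 1]
      have h2 : (33/50 : ℝ) + (33/50 : ℝ) ^ 3 + (33/50 : ℝ) ^ 5 + (33/50 : ℝ) ^ 10 + (33/50 : ℝ) ^ 12 + (33/50 : ℝ) ^ 13 + (33/50 : ℝ) ^ 16 + (33/50 : ℝ) ^ 18 + (33/50 : ℝ) ^ 24 + (33/50 : ℝ) ^ 25 + (33/50 : ℝ) ^ 26 + 2 * (33/50 : ℝ) ^ 27 + (33/50 : ℝ) ^ 28 + (33/50 : ℝ) ^ 29 + (33/50 : ℝ) ^ 31 + (33/50 : ℝ) ^ 39 + 2 * (33/50 : ℝ) ^ 41 + 2 * (33/50 : ℝ) ^ 44 + (33/50 : ℝ) ^ 54 + (33/50 : ℝ) ^ 55 ≤ (1023623929083/929083000000 : ℝ) := by norm_num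
      linarith
    have HL : ∀ k : ℕ, (3/5 : ℝ) ^ k ≤ x ^ k := fun k => pow_le_pow_left₀ (by norm_num) hI0 k
    have hpos : (1268156/970693 : ℝ) ≤ 1 + 2 * x ^ 4 + x ^ 6 + 2 * x ^ 17 + 3 * x ^ 19 + x ^ 20 + x ^ 21 + x ^ 23 + x ^ 32 + x ^ 33 + 2 * x ^ 34 + x ^ 35 + x ^ 36 + x ^ 38 + x ^ 45 + x ^ 49 + x ^ 51 + x ^ 56 := by
      have h3 : 1 + 2 * (3/5 : ℝ) ^ 4 + (3/5 : ℝ) ^ 6 + 2 * (3/5 : ℝ) ^ 17 + 3 * (3/5 : ℝ) ^ 19 + (3/5 : ℝ) ^ 20 + (3/5 : ℝ) ^ 21 + (3/5 : ℝ) ^ 23 + (3/5 : ℝ) ^ 32 + (3/5 : ℝ) ^ 33 + 2 * (3/5 : ℝ) ^ 34 + (3/5 : ℝ) ^ 35 + (3/5 : ℝ) ^ 36 + (3/5 : ℝ) ^ 38 + (3/5 : ℝ) ^ 45 + (3/5 : ℝ) ^ 49 + (3/5 : ℝ) ^ 51 + (3/5 : ℝ) ^ 56 ≤ 1 + 2 *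 x ^ 4 + x ^ 6 + 2 * x ^ 17 + 3 * x ^ 19 + x ^ 20 + x ^ 21 + x ^ 23 + x ^ 32 + x ^ 33 + 2 * x ^ 34 + x ^ 35 + x ^ 36 + x ^ 38 + x ^ 45 + x ^ 49 + x ^ 51 + x ^ 56 := by
        linarith [HL 4, HL 6, HL 17, HL 19, HL 20, HL 21, HL 23, HL 32, HL 33, HL 34, HL 35, HL 36, HL 38, HL 45, HL 49, HL 51, HL 56]
      have h4 : (1268156/970693 : ℝ) ≤ 1 + 2 * (3/5 : ℝ) ^ 4 + (3/5 : ℝ) ^ 6 + 2 * (3/5 : ℝ) ^ 17 + 3 * (3/5 : ℝ) ^ 19 + (3/5 : ℝ) ^ 20 + (3/5 : ℝ) ^ 21 + (3/5 : ℝ) ^ 23 + (3/5 : ℝ) ^ 32 + (3/5 : ℝ) ^ 33 + 2 * (3/5 : ℝ) ^ 34 + (3/5 : ℝ) ^ 35 + (3/5 : ℝ) ^ 36 + (3/5 : ℝ) ^ 38 + (3/5 : ℝ) ^ 45 + (3/5 : ℝ) ^ 49 + (3/5 : ℝ) ^ 51 + (3/5 : ℝ) ^ 56 := by norm_num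
      linarith
    linarith
  have HU : ∀ k : ℕ, x ^ k ≤ (442/625 : ℝ) ^ k := fun k => pow_le_pow_left₀ h0 hr k
  have hneg : x + x ^ 3 + x ^ 5 + x ^ 10 + x ^ 12 + x ^ 13 + x ^ 16 + x ^ 18 + x ^ 24 + x ^ 25 + x ^ 26 + 2 * x ^ 27 + x ^ 28 + x ^ 29 + x ^ 31 + x ^ 39 + 2 * x ^ 41 + 2 * x ^ 44 + x ^ 54 + x ^ 55 ≤ (1548686189/1189000000 : ℝ) := by
    have h1 : x + x ^ 3 + x ^ 5 + x ^ 10 + x ^ 12 + x ^ 13 + x ^ 16 + x ^ 18 + x ^ 24 + x ^ 25 + x ^ 26 + 2 * x ^ 27 + x ^ 28 + x ^ 29 + x ^ 31 + x ^ 39 + 2 * x ^ 41 + 2 * x ^ 44 + x ^ 54 + x ^ 55 ≤ (442/625 : ℝ) + (442/625 : ℝ) ^ 3 + (442/625 : ℝ) ^ 5 + (442/625 : ℝ) ^ 10 + (442/625 : ℝ) ^ 12 + (442/625 : ℝ) ^ 13 + (442/625 : ℝ) ^ 16 + (442/625 : ℝ) ^ 18 + (442/625 : ℝ) ^ 24 +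 (442/625 : ℝ) ^ 25 + (442/625 : ℝ) ^ 26 + 2 * (442/625 : ℝ) ^ 27 + (442/625 : ℝ) ^ 28 + (442/625 : ℝ) ^ 29 + (442/625 : ℝ) ^ 31 + (442/625 : ℝ) ^ 39 + 2 * (442/625 : ℝ) ^ 41 + 2 * (442/625 : ℝ) ^ 44 + (442/625 : ℝ) ^ 54 + (442/625 : ℝ) ^ 55 := by
      linarith [HU 1, HU 3, HU 5, HU 10, HU 12, HU 13, HU 16, HU 18, HU 24, HU 25, HU 26, HU 27, HU 28, HU 29, HU 31, HU 39, HU 41, HU 44, HU 54, HU 55, HU 1]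
    have h2 : (442/625 : ℝ) + (442/625 : ℝ) ^ 3 + (442/625 : ℝ) ^ 5 + (442/625 : ℝ) ^ 10 + (442/625 : ℝ) ^ 12 + (442/625 : ℝ) ^ 13 + (442/625 : ℝ) ^ 16 + (442/625 : ℝ) ^ 18 + (442/625 : ℝ) ^ 24 + (442/625 : ℝ) ^ 25 + (442/625 : ℝ) ^ 26 + 2 * (442/625 : ℝ) ^ 27 + (442/625 : ℝ) ^ 28 + (442/625 : ℝ) ^ 29 + (442/625 : ℝ) ^ 31 + (442/625 : ℝ) ^ 39 + 2 * (442/625 : ℝ) ^ 41 + 2 * (442/625 : ℝ) ^ 44 + (442/625 : ℝ) ^ 54 + (442/625 : ℝ) ^ 55 ≤ (1548686189/1189000000 : ℝ) := by norm_num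
    linarith
  have HL : ∀ k : ℕ, (33/50 : ℝ) ^ k ≤ x ^ k := fun k => pow_le_pow_left₀ (by norm_num) hI1 k
  have hpos : (977194333183/666817000000 : ℝ) ≤ 1 + 2 * x ^ 4 + x ^ 6 + 2 * x ^ 17 + 3 * x ^ 19 + x ^ 20 + x ^ 21 + x ^ 23 + x ^ 32 + x ^ 33 + 2 * x ^ 34 + x ^ 35 + x ^ 36 + x ^ 38 + x ^ 45 + x ^ 49 + x ^ 51 + x ^ 56 := by
    have h3 : 1 + 2 * (33/50 : ℝ) ^ 4 + (33/50 : ℝ) ^ 6 + 2 * (33/50 : ℝ) ^ 17 + 3 * (33/50 : ℝ) ^ 19 + (33/50 : ℝ) ^ 20 + (33/50 : ℝ) ^ 21 + (33/50 : ℝ) ^ 23 + (33/50 : ℝ) ^ 32 + (33/50 : ℝ) ^ 33 + 2 * (33/50 : ℝ) ^ 34 + (33/50 : ℝ) ^ 35 + (33/50 : ℝ) ^ 36 + (33/50 : ℝ) ^ 38 + (33/50 : ℝ) ^ 45 + (33/50 : ℝ) ^ 49 + (33/50 : ℝ) ^ 51 + (33/50 : ℝ) ^ 56 ≤ 1 +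 2 * x ^ 4 + x ^ 6 + 2 * x ^ 17 + 3 * x ^ 19 + x ^ 20 + x ^ 21 + x ^ 23 + x ^ 32 + x ^ 33 + 2 * x ^ 34 + x ^ 35 + x ^ 36 + x ^ 38 + x ^ 45 + x ^ 49 + x ^ 51 + x ^ 56 := by
      linarith [HL 4, HL 6, HL 17, HL 19, HL 20, HL 21, HL 23, HL 32, HL 33, HL 34, HL 35, HL 36, HL 38, HL 45, HL 49, HL 51, HL 56]
    have h4 : (977194333183/666817000000 : ℝ) ≤ 1 + 2 * (33/50 : ℝ) ^ 4 + (33/50 : ℝ) ^ 6 + 2 * (33/50 : ℝ) ^ 17 + 3 * (33/50 : ℝ) ^ 19 + (33/50 : ℝ) ^ 20 + (33/50 : ℝ) ^ 21 + (33/50 : ℝ) ^ 23 + (33/50 : ℝ) ^ 32 + (33/50 : ℝ) ^ 33 + 2 * (33/50 : ℝ) ^ 34 + (33/50 : ℝ) ^ 35 + (33/50 : ℝ) ^ 36 + (33/50 : ℝ) ^ 38 + (33/50 : ℝ) ^ 45 + (33/50 : ℝ) ^ 49 + (33/50 : ℝ) ^ 51 + (33/50 : ℝ) ^ 56 := by 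norm_num
    linarith
  linarith

lemma aux_Hpos (x : ℝ) (h0 : 0 ≤ x) (hr : x ≤ 442/625) :
    0 < 1 - x ^ 3 - x ^ 5 + x ^ 12 + 2 * x ^ 13 + x ^ 14 - x ^ 17 - x ^ 18 - x ^ 19 - 2 * x ^ 20 - x ^ 21 - x ^ 22 - x ^ 24 + 2 * x ^ 25 + 2 * x ^ 26 + 2 * x ^ 27 + 2 * x ^ 28 + x ^ 29 + x ^ 30 - x ^ 32 - x ^ 33 - 2 * x ^ 34 - 2 * x ^ 35 - 2 * x ^ 36 - 2 * x ^ 37 + x ^ 38 + x ^ 40 + x ^ 41 + 2 * x ^ 42 + x ^ 43 + x ^ 44 + x ^ 45 - x ^ 48 - 2 * x ^ 49 - x ^ 50 + x ^ 57 + x ^ 59 - x ^ 62 - x ^ 63 + x ^ 64 := by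
  rcases le_total x (1/2 : ℝ) with hI0 | hI0
  · -- x ∈ [0,1/2]
    have HU : ∀ k : ℕ, x ^ k ≤ (1/2 : ℝ) ^ k := fun k => pow_le_pow_left₀ h0 hI0 k
    have hneg : x ^ 3 + x ^ 5 + x ^ 17 + x ^ 18 + x ^ 19 + 2 * x ^ 20 + x ^ 21 + x ^ 22 + x ^ 24 + x ^ 32 + x ^ 33 + 2 * x ^ 34 + 2 * x ^ 35 + 2 * x ^ 36 + 2 * x ^ 37 + x ^ 48 + 2 * x ^ 49 + x ^ 50 + x ^ 62 + x ^ 63 ≤ (70961954107/454107000000 : ℝ) := by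
      have h1 : x ^ 3 + x ^ 5 + x ^ 17 + x ^ 18 + x ^ 19 + 2 * x ^ 20 + x ^ 21 + x ^ 22 + x ^ 24 + x ^ 32 + x ^ 33 + 2 * x ^ 34 + 2 * x ^ 35 + 2 * x ^ 36 + 2 * x ^ 37 + x ^ 48 + 2 * x ^ 49 + x ^ 50 + x ^ 62 + x ^ 63 ≤ (1/2 : ℝ) ^ 3 + (1/2 : ℝ) ^ 5 + (1/2 : ℝ) ^ 17 + (1/2 : ℝ) ^ 18 + (1/2 : ℝ) ^ 19 + 2 * (1/2 : ℝ) ^ 20 + (1/2 : ℝ) ^ 21 + (1/2 : ℝ) ^ 22 + (1/2 : ℝ) ^ 24 + (1/2 : ℝ) ^ 32 + (1/2 : ℝ) ^ 33 + 2 * (1/2 : ℝ) ^ 34 + 2 * (1/2 : ℝ) ^ 35 + 2 * (1/2 : ℝ) ^ 36 + 2 * (1/2 : ℝ) ^ 37 + (1/2 : ℝ) ^ 48 + 2 * (1/2 : ℝ) ^ 49 + (1/2 : ℝ) ^ 50 + (1/2 : ℝ) ^ 62 + (1/2 : ℝ) ^ 63 := by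
        linarith [HU 3, HU 5, HU 17, HU 18, HU 19, HU 20, HU 21, HU 22, HU 24, HU 32, HU 33, HU 34, HU 35, HU 36, HU 37, HU 48, HU 49, HU 50, HU 62, HU 63, HU 1]
      have h2 : (1/2 : ℝ) ^ 3 + (1/2 : ℝ) ^ 5 + (1/2 : ℝ) ^ 17 + (1/2 : ℝ) ^ 18 + (1/2 : ℝ) ^ 19 + 2 * (1/2 : ℝ) ^ 20 + (1/2 : ℝ) ^ 21 + (1/2 : ℝ) ^ 22 + (1/2 : ℝ) ^ 24 + (1/2 : ℝ) ^ 32 + (1/2 : ℝ) ^ 33 + 2 * (1/2 : ℝ) ^ 34 + 2 * (1/2 : ℝ) ^ 35 + 2 * (1/2 : ℝ) ^ 36 + 2 * (1/2 : ℝ) ^ 37 + (1/2 : ℝ) ^ 48 + 2 * (1/2 : ℝ) ^ 49 + (1/2 : ℝ) ^ 50 + (1/2 : ℝ) ^ 62 + (1/2 : ℝ) ^ 63 ≤ (70961954107/454107000000 : ℝ) := by norm_num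
      linarith
    have hpos : (1:ℝ) ≤ 1 + x ^ 12 + 2 * x ^ 13 + x ^ 14 + 2 * x ^ 25 + 2 * x ^ 26 + 2 * x ^ 27 + 2 * x ^ 28 + x ^ 29 + x ^ 30 + x ^ 38 + x ^ 40 + x ^ 41 + 2 * x ^ 42 + x ^ 43 + x ^ 44 + x ^ 45 + x ^ 57 + x ^ 59 + x ^ 64 := by
      have h3 : (0:ℝ) ≤ x ^ 12 + 2 * x ^ 13 + x ^ 14 + 2 * x ^ 25 + 2 * x ^ 26 + 2 * x ^ 27 + 2 * x ^ 28 + x ^ 29 + x ^ 30 + x ^ 38 + x ^ 40 + x ^ 41 + 2 * x ^ 42 + x ^ 43 + x ^ 44 + x ^ 45 + x ^ 57 + x ^ 59 + x ^ 64 := by positivity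
      linarith
    linarith
  have HU : ∀ k : ℕ, x ^ k ≤ (442/625 : ℝ) ^ k := fun k => pow_le_pow_left₀ h0 hr k
  have hneg : x ^ 3 + x ^ 5 + x ^ 17 + x ^ 18 + x ^ 19 + 2 * x ^ 20 + x ^ 21 + x ^ 22 + x ^ 24 + x ^ 32 + x ^ 33 + 2 * x ^ 34 + 2 * x ^ 35 + 2 * x ^ 36 + 2 * x ^ 37 + x ^ 48 + 2 * x ^ 49 + x ^ 50 + x ^ 62 + x ^ 63 ≤ (241820947693/447693000000 : ℝ) := by
    have h1 : x ^ 3 + x ^ 5 + x ^ 17 + x ^ 18 + x ^ 19 + 2 * x ^ 20 + x ^ 21 + x ^ 22 + x ^ 24 + x ^ 32 + x ^ 33 + 2 * x ^ 34 + 2 * x ^ 35 + 2 * x ^ 36 + 2 * x ^ 37 + x ^ 48 + 2 * x ^ 49 + x ^ 50 + x ^ 62 + x ^ 63 ≤ (442/625 : ℝ) ^ 3 + (442/625 : ℝ) ^ 5 + (442/625 : ℝ) ^ 17 + (442/625 : ℝ) ^ 18 + (442/625 : ℝ) ^ 19 + 2 * (442/625 : ℝ) ^ 20 + (442/625 : ℝ)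 ^ 21 + (442/625 : ℝ) ^ 22 + (442/625 : ℝ) ^ 24 + (442/625 : ℝ) ^ 32 + (442/625 : ℝ) ^ 33 + 2 * (442/625 : ℝ) ^ 34 + 2 * (442/625 : ℝ) ^ 35 + 2 * (442/625 : ℝ) ^ 36 + 2 * (442/625 : ℝ) ^ 37 + (442/625 : ℝ) ^ 48 + 2 * (442/625 : ℝ) ^ 49 + (442/625 : ℝ) ^ 50 + (442/625 : ℝ) ^ 62 + (442/625 : ℝ) ^ 63 := by
      linarith [HU 3, HU 5, HU 17, HU 18, HU 19, HU 20, HU 21, HU 22, HU 24, HU 32, HU 33, HU 34, HU 35, HU 36, HU 37, HU 48, HU 49, HU 50, HU 62, HU 63, HU 1]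
    have h2 : (442/625 : ℝ) ^ 3 + (442/625 : ℝ) ^ 5 + (442/625 : ℝ) ^ 17 + (442/625 : ℝ) ^ 18 + (442/625 : ℝ) ^ 19 + 2 * (442/625 : ℝ) ^ 20 + (442/625 : ℝ) ^ 21 + (442/625 : ℝ) ^ 22 + (442/625 : ℝ) ^ 24 + (442/625 : ℝ) ^ 32 + (442/625 : ℝ) ^ 33 + 2 * (442/625 : ℝ) ^ 34 + 2 * (442/625 : ℝ) ^ 35 + 2 * (442/625 : ℝ) ^ 36 + 2 * (442/625 : ℝ) ^ 37 + (442/625 : ℝ) ^ 48 + 2 * (442/625 : ℝ) ^ 49 + (442/625 : ℝ) ^ 50 + (442/625 : ℝ) ^ 62 + (442/625 : ℝ) ^ 63 ≤ (241820947693/447693000000 : ℝ) := by norm_num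
    linarith
  have HL : ∀ k : ℕ, (1/2 : ℝ) ^ k ≤ x ^ k := fun k => pow_le_pow_left₀ (by norm_num) hI0 k
  have hpos : (814016/813569 : ℝ) ≤ 1 + x ^ 12 + 2 * x ^ 13 + x ^ 14 + 2 * x ^ 25 + 2 * x ^ 26 + 2 * x ^ 27 + 2 * x ^ 28 + x ^ 29 + x ^ 30 + x ^ 38 + x ^ 40 + x ^ 41 + 2 * x ^ 42 + x ^ 43 + x ^ 44 + x ^ 45 + x ^ 57 + x ^ 59 + x ^ 64 := by
    have h3 : 1 + (1/2 : ℝ) ^ 12 + 2 * (1/2 : ℝ) ^ 13 + (1/2 : ℝ) ^ 14 + 2 * (1/2 : ℝ) ^ 25 + 2 * (1/2 : ℝ) ^ 26 + 2 * (1/2 : ℝ) ^ 27 + 2 * (1/2 : ℝ) ^ 28 + (1/2 : ℝ) ^ 29 + (1/2 : ℝ) ^ 30 + (1/2 : ℝ) ^ 38 + (1/2 : ℝ) ^ 40 + (1/2 : ℝ) ^ 41 + 2 * (1/2 : ℝ) ^ 42 + (1/2 : ℝ) ^ 43 + (1/2 : ℝ) ^ 44 + (1/2 : ℝ) ^ 45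 + (1/2 : ℝ) ^ 57 + (1/2 : ℝ) ^ 59 + (1/2 : ℝ) ^ 64 ≤ 1 + x ^ 12 + 2 * x ^ 13 + x ^ 14 + 2 * x ^ 25 + 2 * x ^ 26 + 2 * x ^ 27 + 2 * x ^ 28 + x ^ 29 + x ^ 30 + x ^ 38 + x ^ 40 + x ^ 41 + 2 * x ^ 42 + x ^ 43 + x ^ 44 + x ^ 45 + x ^ 57 + x ^ 59 + x ^ 64 := by
      linarith [HL 12, HL 13, HL 14, HL 25, HL 26, HL 27, HL 28, HL 29, HL 30, HL 38, HL 40, HL 41, HL 42, HL 43, HL 44, HL 45, HL 57, HL 59, HL 64]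
    have h4 : (814016/813569 : ℝ) ≤ 1 + (1/2 : ℝ) ^ 12 + 2 * (1/2 : ℝ) ^ 13 + (1/2 : ℝ) ^ 14 + 2 * (1/2 : ℝ) ^ 25 + 2 * (1/2 : ℝ) ^ 26 + 2 * (1/2 : ℝ) ^ 27 + 2 * (1/2 : ℝ) ^ 28 + (1/2 : ℝ) ^ 29 + (1/2 : ℝ) ^ 30 + (1/2 : ℝ) ^ 38 + (1/2 : ℝ) ^ 40 + (1/2 : ℝ) ^ 41 + 2 * (1/2 : ℝ) ^ 42 + (1/2 : ℝ) ^ 43 + (1/2 : ℝ) ^ 44 + (1/2 : ℝ) ^ 45 + (1/2 : ℝ) ^ 57 + (1/2 : ℝ) ^ 59 + (1/2 : ℝ) ^ 64 := by norm_num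
    linarith
  linarith

lemma aux_hasProd {f : ℕ → ℝ} (hf : ∀ i, 0 < f i) {S : ℝ}
    (h : HasSum (fun i => Real.log (f i)) S) : HasProd f (Real.exp S) := by
  have h1 : Tendsto (fun s : Finset ℕ => Real.exp (∑ i ∈ s, Real.log (f i)))
      atTop (𝓝 (Real.exp S)) := (Real.continuous_exp.tendsto S).comp h
  exact h1.congr fun s => by
    rw [Real.exp_sum]; exact Finset.prod_congr rfl fun i _ => Real.exp_log (hf i)

lemma aux_weier (s : Finset ℕ) (a : ℕ → ℝ) (h0 : ∀ i, 0 ≤ a i) (h1 : ∀ i, a i ≤ 1) :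
    1 - ∑ i ∈ s, a i ≤ ∏ i ∈ s, (1 - a i) := by
  induction s using Finset.cons_induction with
  | empty => simp
  | cons j s hj ih =>
    rw [Finset.prod_cons, Finset.sum_cons]
    have hs0 : 0 ≤ ∑ i ∈ s, a i := Finset.sum_nonneg fun i _ => h0 i
    have h2 : (1 - a j) * (1 - ∑ i ∈ s, a i) ≤ (1 - a j) * ∏ i ∈ s, (1 - a i) :=
      mul_le_mul_of_nonneg_left ih (by linarith [h1 j])
    nlinarith [h0 j, h1 j, mul_nonneg (h0 j) hs0]

theorem stmt14 (q : ℝ) (hq : Real.sqrt 2 ≤ q) :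
    Multipliable (fun i : ℕ => (1 - q⁻¹ ^ (i + 1))) ∧
    1 - 1 / q - 1 / q ^ 2 + 1 / q ^ 5 + 1 / q ^ 7 - 1 / q ^ 12 - 1 / q ^ 15 <
      ∏' i : ℕ, (1 - q⁻¹ ^ (i + 1)) ∧
    ∏' i : ℕ, (1 - q⁻¹ ^ (i + 1)) < 1 - 1 / q := by
  have h2 : (1:ℝ) < Real.sqrt 2 := by
    nlinarith [Real.sq_sqrt (show (0:ℝ) ≤ 2 by norm_num), Real.sqrt_nonneg 2]
  have hq1 : 1 < q := lt_of_lt_of_le h2 hq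
  have hq0 : 0 < q := by linarith
  set x := q⁻¹ with hxdef
  have hx0 : 0 < x := inv_pos.2 hq0
  have hxq : x * q = 1 := inv_mul_cancel₀ (ne_of_gt hq0)
  have hx1 : x < 1 := by nlinarith
  have hq2 : (2:ℝ) ≤ q ^ 2 := by
    nlinarith [Real.sq_sqrt (show (0:ℝ) ≤ 2 by norm_num), Real.sqrt_nonneg 2]
  have hx2 : x ^ 2 ≤ 1 / 2 := by nlinarith [sq_nonneg x, sq_nonneg (x * q)]
  have hxr : x ≤ 442 / 625 := by nlinarith [sq_nonneg (x - 442/625)]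
  have h1x : (0:ℝ) < 1 - x := by linarith
  -- positivity of all factors
  have hf : ∀ i : ℕ, 0 < 1 - x ^ (i + 1) := fun i => by
    have := pow_lt_one₀ hx0.le hx1 (show i + 1 ≠ 0 by omega); linarith
  have hg : ∀ i : ℕ, 0 < 1 - x ^ (i + 12) := fun i => by
    have := pow_lt_one₀ hx0.le hx1 (show i + 12 ≠ 0 by omega); linarith
  -- summability of logs
  have hgeo : Summable (fun i : ℕ => x ^ i) := summable_geometric_of_lt_one hx0.le hx1
  have hS : Summable (fun i : ℕ => Real.log (1 - x ^ (i + 1))) := by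
    have hb : Summable (fun i : ℕ => (1 - x)⁻¹ * (x * x ^ i)) :=
      (hgeo.mul_left x).mul_left (1 - x)⁻¹
    have key : Summable (fun i : ℕ => - Real.log (1 - x ^ (i + 1))) := by
      refine Summable.of_nonneg_of_le (fun i => ?_) (fun i => ?_) hb
      · rw [neg_nonneg]
        exact Real.log_nonpos (by linarith [hf i]) (by nlinarith [pow_nonneg hx0.le (i+1)])
      · have hp : 0 < 1 - x ^ (i + 1) := hf i
        have hlog : Real.log ((1 - x ^ (i + 1))⁻¹) ≤ (1 - x ^ (i + 1))⁻¹ - 1 :=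
          Real.log_le_sub_one_of_pos (by positivity)
        rw [Real.log_inv] at hlog
        have hxi : x ^ (i + 1) ≤ x := by
          calc x ^ (i + 1) ≤ x ^ 1 := pow_le_pow_of_le_one hx0.le hx1.le (by omega)
          _ = x := pow_one x
        have e1 : (1 - x ^ (i + 1))⁻¹ - 1 = x ^ (i + 1) / (1 - x ^ (i + 1)) := by
          field_simp
          ring
        have e2 : x ^ (i + 1) / (1 - x ^ (i + 1)) ≤ x ^ (i + 1) / (1 - x) := by
          apply div_le_div_of_nonneg_left (by positivity) h1x (by linarith)
        calc -Real.log (1 - x ^ (i + 1)) ≤ (1 - x ^ (i + 1))⁻¹ - 1 := by linarith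
        _ = x ^ (i + 1) / (1 - x ^ (i + 1)) := e1
        _ ≤ x ^ (i + 1) / (1 - x) := e2
        _ = (1 - x)⁻¹ * (x * x ^ i) := by rw [div_eq_inv_mul, pow_succ]; ring
    simpa using key.neg
  have hidx : ∀ i : ℕ, i + 11 + 1 = i + 12 := fun i => by omega
  have hS' : Summable (fun i : ℕ => Real.log (1 - x ^ (i + 12))) := by
    have := (summable_nat_add_iff 11).2 hS
    simpa only [hidx] using this
  set S := ∑' i : ℕ, Real.log (1 - x ^ (i + 1)) with hSdef
  set S' := ∑' i : ℕ, Real.log (1 - x ^ (i + 12)) with hS'def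
  have hsplit : (∑ i ∈ Finset.range 11, Real.log (1 - x ^ (i + 1))) + S' = S := by
    rw [hS'def, hSdef]
    have := Summable.sum_add_tsum_nat_add (f := fun i : ℕ => Real.log (1 - x ^ (i + 1))) 11 hS
    simpa only [hidx] using this
  have hHP : HasProd (fun i : ℕ => 1 - x ^ (i + 1)) (Real.exp S) :=
    aux_hasProd hf hS.hasSum
  have hHT : HasProd (fun i : ℕ => 1 - x ^ (i + 12)) (Real.exp S') :=
    aux_hasProd hg hS'.hasSum
  set A := ∏ i ∈ Finset.range 11, (1 - x ^ (i + 1)) with hAdef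
  set T := Real.exp S' with hTdef
  have hT0 : 0 < T := Real.exp_pos _
  have hA0 : 0 < A := Finset.prod_pos fun i _ => hf i
  have hexpA : Real.exp (∑ i ∈ Finset.range 11, Real.log (1 - x ^ (i + 1))) = A := by
    rw [Real.exp_sum]; exact Finset.prod_congr rfl fun i _ => Real.exp_log (hf i)
  have hPT : ∏' i : ℕ, (1 - x ^ (i + 1)) = A * T := by
    rw [hHP.tprod_eq, ← hsplit, Real.exp_add, hexpA]
  -- explicit polynomial form of A
  have hA : A = 1 - x - x ^ 2 + x ^ 5 + x ^ 7 - x ^ 14 - 2 * x ^ 15 - x ^ 16 + x ^ 19 + x ^ 20 + x ^ 21 + 2 * x ^ 22 + x ^ 23 + x ^ 24 + x ^ 26 - 2 * x ^ 27 - 2 * x ^ 28 - 2 * x ^ 29 - 2 * x ^ 30 - x ^ 31 - x ^ 32 + x ^ 34 + x ^ 35 + 2 * x ^ 36 + 2 * x ^ 37 + 2 * x ^ 38 + 2 * x ^ 39 - x ^ 40 - x ^ 42 - x ^ 43 - 2 * x ^ 44 - x ^ 45 - x ^ 46 - x ^ 47 + x ^ 50 + 2 * x ^ 51 + x ^ 52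 - x ^ 59 - x ^ 61 + x ^ 64 + x ^ 65 - x ^ 66 := by
    rw [hAdef]
    simp only [Finset.prod_range_succ, Finset.prod_range_zero]
    ring
  -- tail bounds
  have hT1 : T ≤ 1 := by
    refine le_of_tendsto' hHT fun s => ?_
    exact Finset.prod_le_one (fun i _ => (hg i).le)
      (fun i _ => by nlinarith [pow_nonneg hx0.le (i + 12)])
  have hgeosum : ∀ s : Finset ℕ, ∑ i ∈ s, x ^ (i + 12) ≤ x ^ 12 * (1 - x)⁻¹ := by
    intro s
    have hsummable : Summable (fun i : ℕ => x ^ (i + 12)) := by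
      refine (hgeo.mul_right (x ^ 12)).congr fun i => ?_
      rw [← pow_add]
    have htsum : ∑' i : ℕ, x ^ (i + 12) = x ^ 12 * (1 - x)⁻¹ := by
      calc ∑' i : ℕ, x ^ (i + 12) = ∑' i : ℕ, x ^ i * x ^ 12 := by
            exact tsum_congr fun i => by rw [← pow_add]
      _ = (∑' i : ℕ, x ^ i) * x ^ 12 := tsum_mul_right
      _ = (1 - x)⁻¹ * x ^ 12 := by rw [tsum_geometric_of_lt_one hx0.le hx1]
      _ = x ^ 12 * (1 - x)⁻¹ := by ring
    calc ∑ i ∈ s, x ^ (i + 12) ≤ ∑' i : ℕ, x ^ (i + 12) :=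
          Summable.sum_le_tsum s (fun i _ => by positivity) hsummable
    _ = x ^ 12 * (1 - x)⁻¹ := htsum
  have hT2 : 1 - x ^ 12 * (1 - x)⁻¹ ≤ T := by
    refine ge_of_tendsto' hHT fun s => ?_
    calc 1 - x ^ 12 * (1 - x)⁻¹ ≤ 1 - ∑ i ∈ s, x ^ (i + 12) := by
          linarith [hgeosum s]
    _ ≤ ∏ i ∈ s, (1 - x ^ (i + 12)) :=
        aux_weier s (fun i => x ^ (i + 12)) (fun i => by positivity)
          (fun i => pow_le_one₀ hx0.le hx1.le)
  -- rewrite goal in terms of x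
  have hxpow : ∀ k : ℕ, 1 / q ^ k = x ^ k := fun k => by
    rw [one_div, ← inv_pow]
  have hx1q : 1 / q = x := by rw [one_div]
  rw [hx1q, hxpow 2, hxpow 5, hxpow 7, hxpow 12, hxpow 15]
  refine ⟨hHP.multipliable, ?_, ?_⟩
  · -- lower bound
    rw [hPT]
    have hGpos := aux_Gpos x hx0.le hxr
    have hid : (1 - x - x ^ 2 + x ^ 5 + x ^ 7 - x ^ 14 - 2 * x ^ 15 - x ^ 16 + x ^ 19 + x ^ 20 + x ^ 21 + 2 * x ^ 22 + x ^ 23 + x ^ 24 + x ^ 26 - 2 * x ^ 27 - 2 * x ^ 28 - 2 * x ^ 29 - 2 * x ^ 30 - x ^ 31 - x ^ 32 + x ^ 34 + x ^ 35 + 2 * x ^ 36 + 2 * x ^ 37 + 2 * x ^ 38 + 2 * x ^ 39 - x ^ 40 - x ^ 42 - x ^ 43 - 2 * x ^ 44 - x ^ 45 - x ^ 46 - x ^ 47 + x ^ 50 + 2 * x ^ 51 + x ^ 52 - x ^ 59 - x ^ 61 + x ^ 64 + x ^ 65 - x ^ 66) * (1 - x - x ^ 12)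
        - (1 - x - x ^ 2 + x ^ 5 + x ^ 7 - x ^ 12 - x ^ 15) * (1 - x) = x ^ 22 * (1 - x - x ^ 3 + 2 * x ^ 4 - x ^ 5 + x ^ 6 - x ^ 10 - x ^ 12 - x ^ 13 - x ^ 16 + 2 * x ^ 17 - x ^ 18 + 3 * x ^ 19 + x ^ 20 + x ^ 21 + x ^ 23 - x ^ 24 - x ^ 25 - x ^ 26 - 2 * x ^ 27 - x ^ 28 - x ^ 29 - x ^ 31 + x ^ 32 + x ^ 33 + 2 * x ^ 34 + x ^ 35 + x ^ 36 + x ^ 38 - x ^ 39 - 2 * x ^ 41 - 2 * x ^ 44 + x ^ 45 + x ^ 49 + x ^ 51 - x ^ 54 - x ^ 55 + x ^ 56) := by ring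
    have hkey : (1 - x - x ^ 2 + x ^ 5 + x ^ 7 - x ^ 12 - x ^ 15) * (1 - x) < A * (1 - x - x ^ 12) := by
      rw [hA]
      nlinarith [mul_pos (pow_pos hx0 22) hGpos]
    have hfrac : A * (1 - x ^ 12 * (1 - x)⁻¹) = A * (1 - x - x ^ 12) / (1 - x) := by
      field_simp
    have hlow : 1 - x - x ^ 2 + x ^ 5 + x ^ 7 - x ^ 12 - x ^ 15 < A * (1 - x ^ 12 * (1 - x)⁻¹) := by
      rw [hfrac, lt_div_iff₀ h1x]
      exact hkey
    calc 1 - x - x ^ 2 + x ^ 5 + x ^ 7 - x ^ 12 - x ^ 15 < A * (1 - x ^ 12 * (1 - x)⁻¹) := hlow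
    _ ≤ A * T := mul_le_mul_of_nonneg_left hT2 hA0.le
  · -- upper bound
    rw [hPT]
    have hHpos := aux_Hpos x hx0.le hxr
    have hid : (1 - x) - (1 - x - x ^ 2 + x ^ 5 + x ^ 7 - x ^ 14 - 2 * x ^ 15 - x ^ 16 + x ^ 19 + x ^ 20 + x ^ 21 + 2 * x ^ 22 + x ^ 23 + x ^ 24 + x ^ 26 - 2 * x ^ 27 - 2 * x ^ 28 - 2 * x ^ 29 - 2 * x ^ 30 - x ^ 31 - x ^ 32 + x ^ 34 + x ^ 35 + 2 * x ^ 36 + 2 * x ^ 37 + 2 * x ^ 38 + 2 * x ^ 39 - x ^ 40 - x ^ 42 - x ^ 43 - 2 * x ^ 44 - x ^ 45 - x ^ 46 - x ^ 47 + x ^ 50 + 2 * x ^ 51 + x ^ 52 - x ^ 59 - x ^ 61 + x ^ 64 + x ^ 65 - x ^ 66) = x ^ 2 * (1 - x ^ 3 - x ^ 5 + x ^ 12 + 2 * x ^ 13 + x ^ 14 - x ^ 17 - x ^ 18 - x ^ 19 - 2 * x ^ 20 - x ^ 21 - x ^ 22 - x ^ 24 + 2 * x ^ 25 + 2 * x ^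 26 + 2 * x ^ 27 + 2 * x ^ 28 + x ^ 29 + x ^ 30 - x ^ 32 - x ^ 33 - 2 * x ^ 34 - 2 * x ^ 35 - 2 * x ^ 36 - 2 * x ^ 37 + x ^ 38 + x ^ 40 + x ^ 41 + 2 * x ^ 42 + x ^ 43 + x ^ 44 + x ^ 45 - x ^ 48 - 2 * x ^ 49 - x ^ 50 + x ^ 57 + x ^ 59 - x ^ 62 - x ^ 63 + x ^ 64) := by ring
    have hAlt : A < 1 - x := by
      rw [hA]
      nlinarith [mul_pos (pow_pos hx0 2) hHpos]
    calc A * T ≤ A * 1 := mul_le_mul_of_nonneg_left hT1 hA0.le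
    _ = A := mul_one A
    _ < 1 - x := hAlt
end
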